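/- arXiv:0909.0645 — 6 statements merged into one kernel-verified Lean document; each statement's English description precedes it below -/
import Mathlib

section
/- Let X' : Ω' → [0,∞] be any function. Then Σ_{ω ∈ H} X'(f(ω)) · W(ω) · Q{ω} = Σ_{ω' ∈ H'} X'(ω') · P{ω'}, as an identity in [0,∞]. In particular, if X' : Ω' → ℝ and ω ↦ X'(f(ω)) W(ω) is Q-integrable on H, then E_Q[X'(f(·)) W(·); H] = E_P[X'; H']. -/
open MeasureTheory ENNReal

/-- Rao–Blackwell-type identity for importance sampling weights on countable spaces. -/
theorem stmt_0
    {Ω Ω' : Type*} [Countable Ω] [Countable Ω']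
    [MeasurableSpace Ω] [MeasurableSingletonClass Ω]
    [MeasurableSpace Ω'] [MeasurableSingletonClass Ω']
    (Q : Measure Ω) [IsProbabilityMeasure Q]
    (P : Measure Ω') [IsProbabilityMeasure P]
    (f : Ω → Ω') (H' : Set Ω')
    (habs : ∀ ω' ∈ H', Q (f ⁻¹' {ω'}) = 0 → P {ω'} = 0)
    (W : Ω → ℝ≥0∞)
    (hW : ∀ ω, W ω = if Q (f ⁻¹' {f ω}) = 0 then 0 else P {f ω} / Q (f ⁻¹' {f ω})) :
    (∀ X' : Ω' → ℝ≥0∞,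
        ∑' ω : (f ⁻¹' H' : Set Ω), X' (f ω.1) * W ω.1 * Q {ω.1}
          = ∑' ω' : H', X' ω'.1 * P {ω'.1}) ∧
    (∀ X' : Ω' → ℝ,
        IntegrableOn (fun ω => X' (f ω) * (W ω).toReal) (f ⁻¹' H') Q →
        ∫ ω in f ⁻¹' H', X' (f ω) * (W ω).toReal ∂Q = ∫ ω' in H', X' ω' ∂P) := by
  have hfmeas : Measurable f := measurable_of_countable f
  have hH' : MeasurableSet H' := (Set.to_countable H').measurableSet
  have hWfin : ∀ ω, W ω ≠ ∞ := by
    intro ω; rw [hW]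
    split
    · simp
    · exact (ENNReal.div_lt_top (measure_ne_top P _) ‹_›).ne
  -- Main lintegral identity.
  have key : ∀ g : Ω' → ℝ≥0∞,
      ∫⁻ ω in f ⁻¹' H', g (f ω) * W ω ∂Q = ∫⁻ ω' in H', g ω' ∂P := by
    intro g
    have hmap : ∀ ω' : Ω', Q.map f {ω'} = Q (f ⁻¹' {ω'}) := fun ω' =>
      Measure.map_apply hfmeas (measurableSet_singleton _)
    calc ∫⁻ ω in f ⁻¹' H', g (f ω) * W ω ∂Q
        = ∫⁻ ω in f ⁻¹' H',
            (fun ω' => g ω' * if Q.map f {ω'} = 0 then 0 else P {ω'} / Q.map f {ω'}) (f ω) ∂Q := by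
          refine lintegral_congr fun ω => ?_
          simp only [hW ω, hmap]
      _ = ∫⁻ ω' in H',
            g ω' * (if Q.map f {ω'} = 0 then 0 else P {ω'} / Q.map f {ω'}) ∂(Q.map f) :=
          (setLIntegral_map (f := fun ω' => g ω' * if Q.map f {ω'} = 0 then 0 else P {ω'} / Q.map f {ω'}) hH' (measurable_of_countable _) hfmeas).symm
      _ = ∑' ω' : H',
            (g ω'.1 * if Q.map f {ω'.1} = 0 then 0 else P {ω'.1} / Q.map f {ω'.1})
              * Q.map f {ω'.1} :=
          lintegral_countable _ (Set.to_countable H')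
      _ = ∑' ω' : H', g ω'.1 * P {ω'.1} := by
          refine tsum_congr fun ⟨ω', hω'⟩ => ?_
          by_cases h : Q.map f {ω'} = 0
          · have hP : P {ω'} = 0 := habs ω' hω' (by rwa [hmap] at h)
            simp [h, hP]
          · rw [if_neg h, mul_assoc, ENNReal.div_mul_cancel h (measure_ne_top _ _)]
      _ = ∫⁻ ω' in H', g ω' ∂P := (lintegral_countable _ (Set.to_countable H')).symm
  constructor
  · intro X'
    calc ∑' ω : (f ⁻¹' H' : Set Ω), X' (f ω.1) * W ω.1 * Q {ω.1}
        = ∫⁻ ω in f ⁻¹' H', X' (f ω) * W ω ∂Q :=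
          (lintegral_countable (fun ω => X' (f ω) * W ω) (Set.to_countable _)).symm
      _ = ∫⁻ ω' in H', X' ω' ∂P := key X'
      _ = ∑' ω' : H', X' ω'.1 * P {ω'.1} := lintegral_countable _ (Set.to_countable H')
  · intro X' hX
    -- integrability of X' on H' w.r.t. P
    have hnn : ∀ ω, (‖X' (f ω) * (W ω).toReal‖₊ : ℝ≥0∞) = (‖X' (f ω)‖₊ : ℝ≥0∞) * W ω := by
      intro ω
      rw [nnnorm_mul, ENNReal.coe_mul]
      congr 1
      rw [← enorm_eq_nnnorm, Real.enorm_eq_ofReal ENNReal.toReal_nonneg, ENNReal.ofReal_toReal (hWfin ω)]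
    have hPint : IntegrableOn X' H' P := by
      refine ⟨(measurable_of_countable X').aestronglyMeasurable, ?_⟩
      have := hX.2
      unfold HasFiniteIntegral at this ⊢
      calc ∫⁻ ω' in H', (‖X' ω'‖₊ : ℝ≥0∞) ∂P
          = ∫⁻ ω in f ⁻¹' H', (‖X' (f ω)‖₊ : ℝ≥0∞) * W ω ∂Q := (key fun ω' => (‖X' ω'‖₊ : ℝ≥0∞)).symm
        _ = ∫⁻ ω in f ⁻¹' H', (‖X' (f ω) * (W ω).toReal‖₊ : ℝ≥0∞) ∂Q :=
            lintegral_congr fun ω => (hnn ω).symm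
        _ < ∞ := this
    have hpos : ∀ ω, ENNReal.ofReal (X' (f ω) * (W ω).toReal)
        = ENNReal.ofReal (X' (f ω)) * W ω := by
      intro ω
      rw [mul_comm (X' (f ω)), ENNReal.ofReal_mul ENNReal.toReal_nonneg,
        ENNReal.ofReal_toReal (hWfin ω), mul_comm]
    have hneg : ∀ ω, ENNReal.ofReal (-(X' (f ω) * (W ω).toReal))
        = ENNReal.ofReal (-X' (f ω)) * W ω := by
      intro ω
      rw [show -(X' (f ω) * (W ω).toReal) = (W ω).toReal * -X' (f ω) by ring,
        ENNReal.ofReal_mul ENNReal.toReal_nonneg, ENNReal.ofReal_toReal (hWfin ω), mul_comm]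
    rw [integral_eq_lintegral_pos_part_sub_lintegral_neg_part hX,
      integral_eq_lintegral_pos_part_sub_lintegral_neg_part hPint]
    congr 1
    · congr 1
      calc ∫⁻ ω in f ⁻¹' H', ENNReal.ofReal (X' (f ω) * (W ω).toReal) ∂Q
          = ∫⁻ ω in f ⁻¹' H', ENNReal.ofReal (X' (f ω)) * W ω ∂Q :=
            lintegral_congr hpos
        _ = ∫⁻ ω' in H', ENNReal.ofReal (X' ω') ∂P := key fun ω' => ENNReal.ofReal (X' ω')
    · congr 1
      calc ∫⁻ ω in f ⁻¹' H', ENNReal.ofReal (-(X' (f ω) * (W ω).toReal)) ∂Q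
          = ∫⁻ ω in f ⁻¹' H', ENNReal.ofReal (-X' (f ω)) * W ω ∂Q :=
            lintegral_congr hneg
        _ = ∫⁻ ω' in H', ENNReal.ofReal (-X' ω') ∂P := key fun ω' => ENNReal.ofReal (-X' ω')
end

section
/- (Mapping theorem for importance sampling, almost-sure convergence.) Assume in addition that Q(H) = 1, and let X' : Ω' → ℝ be such that ω ↦ X'(f(ω)) W(ω) is Q-integrable. Let (ω_i)_{i≥1} be an independent, identically distributed sequence of Ω-valued random variables with common law Q, defined on some probability space. Then, almost surely, r⁻¹ Σ_{i=1}^{r} X'(f(ω_i)) W(ω_i) → Σ_{ω' ∈ H'} X'(ω') P{ω'} = E_P[X'; H'] as r → ∞. -/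
open MeasureTheory ENNReal ProbabilityTheory Filter

/-- Mapping theorem for importance sampling: almost-sure convergence. -/
theorem stmt_1
    {Ω Ω' : Type*} [Countable Ω] [Countable Ω']
    [MeasurableSpace Ω] [MeasurableSingletonClass Ω]
    [MeasurableSpace Ω'] [MeasurableSingletonClass Ω']
    (Q : Measure Ω) [IsProbabilityMeasure Q]
    (P : Measure Ω') [IsProbabilityMeasure P]
    (f : Ω → Ω') (H' : Set Ω')
    (habs : ∀ ω' ∈ H', Q (f ⁻¹' {ω'}) = 0 → P {ω'} = 0)
    (W : Ω → ℝ≥0∞)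
    (hW : ∀ ω, W ω = if Q (f ⁻¹' {f ω}) = 0 then 0 else P {f ω} / Q (f ⁻¹' {f ω}))
    (hH : Q (f ⁻¹' H') = 1)
    (X' : Ω' → ℝ)
    (hint : Integrable (fun ω => X' (f ω) * (W ω).toReal) Q)
    {Θ : Type*} [MeasurableSpace Θ] (μ : Measure Θ) [IsProbabilityMeasure μ]
    (ωs : ℕ → Θ → Ω)
    (hmeas : ∀ i, Measurable (ωs i))
    (hlaw : ∀ i, Measure.map (ωs i) μ = Q)
    (hindep : iIndepFun ωs μ) :
    ∀ᵐ θ ∂μ, Tendsto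
      (fun r : ℕ => (∑ i ∈ Finset.range r, X' (f (ωs i θ)) * (W (ωs i θ)).toReal) / r)
      atTop (nhds (∫ ω' in H', X' ω' ∂P)) := by
  have hf : Measurable f := measurable_of_countable f
  -- the weight function on Ω'
  set w : Ω' → ℝ≥0∞ := fun ω' => if Q (f ⁻¹' {ω'}) = 0 then 0 else P {ω'} / Q (f ⁻¹' {ω'})
    with hw
  have hWw : ∀ ω, W ω = w (f ω) := fun ω => hW ω
  have hwfin : ∀ ω', w ω' ≠ ∞ := by
    intro ω'
    simp only [hw]
    split_ifs with h
    · simp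
    · exact (ENNReal.div_lt_top (measure_ne_top P _) h).ne
  -- the function whose Q-integral we take, pushed to Ω'
  set Y : Ω → ℝ := fun ω => X' (f ω) * (W ω).toReal with hY
  set g : Ω' → ℝ := fun ω' => X' ω' * (w ω').toReal with hg
  have hYg : Y = g ∘ f := by
    funext ω; simp only [hY, hg, Function.comp, hWw]
  have hgmeas : Measurable g := measurable_of_countable g
  -- key identity: ∫ Y dQ = ∫_{H'} X' dP
  have key : ∫ ω, Y ω ∂Q = ∫ ω' in H', X' ω' ∂P := by
    have h1 : ∫ ω, Y ω ∂Q = ∫ ω', g ω' ∂(Q.map f) := by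
      rw [hYg, integral_map hf.aemeasurable hgmeas.aestronglyMeasurable]
      rfl
    have hH'meas : MeasurableSet H' := H'.to_countable.measurableSet
    have : IsProbabilityMeasure (Q.map f) := Measure.isProbabilityMeasure_map hf.aemeasurable
    have hcompl : (Q.map f) H'ᶜ = 0 := (prob_compl_eq_zero_iff hH'meas).mpr
      (by rw [Measure.map_apply hf hH'meas]; exact hH)
    have h2 : ∫ ω', g ω' ∂(Q.map f) = ∫ ω' in H', g ω' ∂(Q.map f) := by
      rw [Measure.restrict_eq_self_of_ae_mem]
      exact (ae_iff.mpr (by exact hcompl))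
    -- measure identity: ((Q.map f).restrict H').withDensity w = P.restrict H'
    set wn : Ω' → NNReal := fun a => (w a).toNNReal with hwn
    have hwcoe : ∀ a, ((wn a : ℝ≥0∞)) = w a := fun a => ENNReal.coe_toNNReal (hwfin a)
    have hmeq : ((Q.map f).restrict H').withDensity (fun a => (wn a : ℝ≥0∞))
        = P.restrict H' := by
      apply Measure.ext_of_singleton
      intro a
      rw [MeasureTheory.withDensity_apply _ (MeasurableSet.singleton a)]
      rw [Measure.restrict_restrict (MeasurableSet.singleton a)]
      by_cases ha : a ∈ H'
      · have hinter : {a} ∩ H' = {a} := Set.inter_eq_left.mpr (by simpa using ha)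
        rw [hinter, lintegral_singleton, Measure.restrict_apply (MeasurableSet.singleton a),
          hinter, hwcoe, Measure.map_apply hf (MeasurableSet.singleton a)]
        simp only [hw]
        split_ifs with h
        · simp [habs a ha h]
        · rw [ENNReal.div_mul_cancel h (measure_ne_top Q _)]
      · have hinter : {a} ∩ H' = ∅ := by
          ext x; simp only [Set.mem_inter_iff, Set.mem_singleton_iff, Set.mem_empty_iff_false,
            iff_false, not_and]
          rintro rfl; exact ha
        rw [hinter, Measure.restrict_apply (MeasurableSet.singleton a), hinter]
        simp
    have hwnmeas : Measurable wn := measurable_of_countable wn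
    have h3 : ∫ ω' in H', g ω' ∂(Q.map f) = ∫ ω' in H', X' ω' ∂P := by
      calc ∫ ω' in H', g ω' ∂(Q.map f)
          = ∫ ω', wn ω' • X' ω' ∂((Q.map f).restrict H') := by
            apply integral_congr_ae
            filter_upwards with a
            simp [hg, ← hwcoe a, NNReal.smul_def, mul_comm]
        _ = ∫ ω', X' ω' ∂(((Q.map f).restrict H').withDensity (fun a => (wn a : ℝ≥0∞))) := by
            rw [integral_withDensity_eq_integral_smul hwnmeas]
        _ = ∫ ω' in H', X' ω' ∂P := by rw [hmeq]
    rw [h1, h2, h3]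
  -- now apply the strong law of large numbers
  have hYmeas : Measurable Y := measurable_of_countable Y
  have hident : ∀ i, IdentDistrib (fun θ => Y (ωs i θ)) (fun θ => Y (ωs 0 θ)) μ μ := by
    intro i
    have : IdentDistrib (ωs i) (ωs 0) μ μ :=
      ⟨(hmeas i).aemeasurable, (hmeas 0).aemeasurable, by rw [hlaw i, hlaw 0]⟩
    exact this.comp hYmeas
  have hindep' : Pairwise (Function.onFun (IndepFun · · μ) fun i θ => Y (ωs i θ)) := by
    intro i j hij
    exact (hindep.indepFun hij).comp hYmeas hYmeas
  have hint0 : Integrable (fun θ => Y (ωs 0 θ)) μ := by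
    have : Integrable Y (Measure.map (ωs 0) μ) := by rw [hlaw 0]; exact hint
    exact (integrable_map_measure hYmeas.aestronglyMeasurable
      (hmeas 0).aemeasurable).mp this
  have hslln := strong_law_ae_real (μ := μ) (fun i θ => Y (ωs i θ)) hint0 hindep' hident
  have hmean : ∫ θ, Y (ωs 0 θ) ∂μ = ∫ ω' in H', X' ω' ∂P := by
    rw [← key, ← integral_map (hmeas 0).aemeasurable hYmeas.aestronglyMeasurable, hlaw 0]
  filter_upwards [hslln] with θ hθ
  rw [hmean] at hθ
  simpa [hY] using hθ
end

section
/- (Mapping theorem for importance sampling, convergence in mean.) Assume in addition that Q(H) = 1, and let X' : Ω' → ℝ be such that ω ↦ X'(f(ω)) W(ω) is Q-integrable. Let (ω_i)_{i≥1} be an independent, identically distributed sequence of Ω-valued random variables with common law Q. Then E| r⁻¹ Σ_{i=1}^{r} X'(f(ω_i)) W(ω_i) − E_P[X'; H'] | → 0 as r → ∞, where E_P[X'; H'] = Σ_{ω' ∈ H'} X'(ω') P{ω'}. -/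
open MeasureTheory ENNReal ProbabilityTheory Filter

/-- Mapping theorem for importance sampling: convergence in mean. -/
theorem stmt_2
    {Ω Ω' : Type*} [Countable Ω] [Countable Ω']
    [MeasurableSpace Ω] [MeasurableSingletonClass Ω]
    [MeasurableSpace Ω'] [MeasurableSingletonClass Ω']
    (Q : Measure Ω) [IsProbabilityMeasure Q]
    (P : Measure Ω') [IsProbabilityMeasure P]
    (f : Ω → Ω') (H' : Set Ω')
    (habs : ∀ ω' ∈ H', Q (f ⁻¹' {ω'}) = 0 → P {ω'} = 0)
    (W : Ω → ℝ≥0∞)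
    (hW : ∀ ω, W ω = if Q (f ⁻¹' {f ω}) = 0 then 0 else P {f ω} / Q (f ⁻¹' {f ω}))
    (hH : Q (f ⁻¹' H') = 1)
    (X' : Ω' → ℝ)
    (hint : Integrable (fun ω => X' (f ω) * (W ω).toReal) Q)
    {Θ : Type*} [MeasurableSpace Θ] (μ : Measure Θ) [IsProbabilityMeasure μ]
    (ωs : ℕ → Θ → Ω)
    (hmeas : ∀ i, Measurable (ωs i))
    (hlaw : ∀ i, Measure.map (ωs i) μ = Q)
    (hindep : iIndepFun ωs μ) :
    Tendsto
      (fun r : ℕ => ∫ θ,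
        |(∑ i ∈ Finset.range r, X' (f (ωs i θ)) * (W (ωs i θ)).toReal) / r
          - ∫ ω' in H', X' ω' ∂P| ∂μ)
      atTop (nhds 0) := by
  classical
  have fmeas : Measurable f := measurable_of_countable f
  set v : Ω' → ℝ≥0∞ := fun ω' => if Q (f ⁻¹' {ω'}) = 0 then 0 else P {ω'} / Q (f ⁻¹' {ω'})
    with hv
  have vlt : ∀ ω', v ω' ≠ ∞ := by
    intro ω'
    by_cases h : Q (f ⁻¹' {ω'}) = 0
    · simp [hv, h]
    · simp only [hv, if_neg h]
      exact (ENNReal.div_lt_top (measure_ne_top _ _) h).ne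
  have hWv : ∀ ω, W ω = v (f ω) := fun ω => hW ω
  have hQ0 : ∀ ω' ∉ H', Q (f ⁻¹' {ω'}) = 0 := by
    intro ω' hω'
    have hc : Q (f ⁻¹' H')ᶜ = 0 := by
      rw [measure_compl ((Set.to_countable _).measurableSet) (measure_ne_top _ _), hH]
      simp
    refine measure_mono_null ?_ hc
    intro ω hω
    simp only [Set.mem_preimage, Set.mem_singleton_iff] at hω
    simp only [Set.mem_compl_iff, Set.mem_preimage, hω]
    exact hω'
  have hPrestrict : P.restrict H' = (Measure.map f Q).withDensity v := by
    refine MeasureTheory.Measure.ext_of_singleton (fun ω' => ?_)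
    rw [Measure.restrict_apply (MeasurableSet.singleton _),
      withDensity_apply _ (MeasurableSet.singleton _), lintegral_singleton,
      Measure.map_apply fmeas (MeasurableSet.singleton _)]
    by_cases hmem : ω' ∈ H'
    · have : {ω'} ∩ H' = {ω'} := by
        ext x; simp (config := {contextual := true}) [hmem]
      rw [this]
      by_cases h : Q (f ⁻¹' {ω'}) = 0
      · rw [habs ω' hmem h, h, mul_zero]
      · rw [hv]
        simp only [if_neg h]
        rw [ENNReal.div_mul_cancel h (measure_ne_top _ _)]
    · have : {ω'} ∩ H' = ∅ := by
        ext x; simp (config := {contextual := true}) [hmem]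
      rw [this, hQ0 ω' hmem, mul_zero, measure_empty]
  -- key identity for the mean
  have key : ∫ ω' in H', X' ω' ∂P = ∫ ω, X' (f ω) * (W ω).toReal ∂Q := by
    have hvnn : v = fun ω' => ((v ω').toNNReal : ℝ≥0∞) :=
      funext fun ω' => (ENNReal.coe_toNNReal (vlt ω')).symm
    calc ∫ ω' in H', X' ω' ∂P = ∫ ω', X' ω' ∂((Measure.map f Q).withDensity v) := by
          rw [hPrestrict]
      _ = ∫ ω', X' ω' * (v ω').toReal ∂(Measure.map f Q) := by
          rw [hvnn, integral_withDensity_eq_integral_smul (measurable_of_countable _) X']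
          simp [NNReal.smul_def, ENNReal.toReal, mul_comm]
      _ = ∫ ω, X' (f ω) * (v (f ω)).toReal ∂Q :=
          integral_map fmeas.aemeasurable (measurable_of_countable _).aestronglyMeasurable
      _ = ∫ ω, X' (f ω) * (W ω).toReal ∂Q := by simp_rw [hWv]
  set g : Ω → ℝ := fun ω => X' (f ω) * (W ω).toReal with hg
  have gmeas : Measurable g := measurable_of_countable g
  have hYint : ∀ i, Integrable (fun θ => g (ωs i θ)) μ := by
    intro i
    have : Integrable g (Measure.map (ωs i) μ) := by rw [hlaw i]; exact hint
    exact (integrable_map_measure gmeas.aestronglyMeasurable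
      (hmeas i).aemeasurable).mp this
  have hident : ∀ i, IdentDistrib (fun θ => g (ωs i θ)) (fun θ => g (ωs 0 θ)) μ μ := by
    intro i
    have hbase : IdentDistrib (ωs i) (ωs 0) μ μ :=
      ⟨(hmeas i).aemeasurable, (hmeas 0).aemeasurable, by rw [hlaw i, hlaw 0]⟩
    exact hbase.comp gmeas
  have hindepY : Pairwise (Function.onFun (IndepFun · · μ) fun i θ => g (ωs i θ)) :=
    fun i j hij => (hindep.indepFun hij).comp gmeas gmeas
  have hL := strong_law_Lp (le_refl (1 : ℝ≥0∞)) one_ne_top (fun i θ => g (ωs i θ))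
    (memLp_one_iff_integrable.2 (hYint 0)) hindepY hident
  have hmean : μ[fun θ => g (ωs 0 θ)] = ∫ ω' in H', X' ω' ∂P := by
    rw [key, ← hlaw 0,
      integral_map (hmeas 0).aemeasurable gmeas.aestronglyMeasurable]
  have hto : Tendsto (fun r : ℕ =>
      (eLpNorm (fun θ => (r : ℝ)⁻¹ • (∑ i ∈ Finset.range r, g (ωs i θ))
        - μ[fun θ => g (ωs 0 θ)]) 1 μ).toReal) atTop (nhds 0) := by
    have := (ENNReal.tendsto_toReal (a := 0) (by simp)).comp hL
    simpa [Function.comp_def] using this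
  refine hto.congr fun r => ?_
  have hfun : (fun θ => (r : ℝ)⁻¹ • (∑ i ∈ Finset.range r, g (ωs i θ))
      - μ[fun θ => g (ωs 0 θ)])
      = fun θ => (∑ i ∈ Finset.range r, X' (f (ωs i θ)) * (W (ωs i θ)).toReal) / r
          - ∫ ω' in H', X' ω' ∂P := by
    funext θ
    rw [hmean]
    simp [div_eq_inv_mul, hg]
  have hAE : AEStronglyMeasurable (fun θ => (r : ℝ)⁻¹ • (∑ i ∈ Finset.range r, g (ωs i θ))
      - μ[fun θ => g (ωs 0 θ)]) μ := by
    have h1 : Measurable fun θ => ∑ i ∈ Finset.range r, g (ωs i θ) :=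
      Finset.measurable_sum (Finset.range r) (fun i _ => gmeas.comp (hmeas i))
    exact ((h1.const_smul ((r : ℝ)⁻¹)).sub measurable_const).aestronglyMeasurable
  rw [eLpNorm_one_eq_lintegral_enorm, ← integral_norm_eq_lintegral_enorm hAE]
  simp only [Real.norm_eq_abs]
  exact integral_congr_ae (Filter.Eventually.of_forall fun θ => by simpa using congrArg abs (congrFun hfun θ))
end

section
/- (Markov renewal identity for ladder variates, equation (2.1).) For every θ ∈ ℝ, every integer k ≥ 1, every j ∈ 𝔍 and every initial distribution γ on 𝔍, E_γ[ exp(θ T_{β(k)}) ; J_{β(k)} = j, β(k) < ∞ ] = (γ L_θᵏ)_j, as an identity in [0,∞], where γ L_θᵏ denotes the row vector γ multiplied by the k-th power of the matrix L_θ (matrix operations in [0,∞]). Consequently E_γ[ exp(θ T_{β(k)}) ; β(k) < ∞ ] = γ L_θᵏ 1ᵗ, where 1ᵗ is the column vector of ones. -/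
open MeasureTheory ENNReal

/-- The partial sums `T_n = Σ_{m=0}^n Y_m` of the additive part of a trajectory. -/
noncomputable def Tsum {J : Type*} (ω : ℕ → J × ℝ) (n : ℕ) : ℝ :=
  ∑ m ∈ Finset.range (n + 1), (ω m).2

/-- Strict ascending ladder epochs of the sequence `(T_n)`, with value `⊤ = ∞` when
no further ladder epoch exists: `β(0) = 0` and
`β(k+1) = inf{n > β(k) : T_n > T_{β(k)}}` (`inf ∅ = ∞`). -/
noncomputable def ladder {J : Type*} (ω : ℕ → J × ℝ) : ℕ → ℕ∞
  | 0 => 0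
  | k + 1 =>
      ⨅ (n : ℕ) (_ : ∃ m : ℕ, ladder ω k = (m : ℕ∞) ∧ m < n ∧ Tsum ω m < Tsum ω n),
        (n : ℕ∞)

set_option linter.unusedSectionVars false

namespace Stmt8

lemma iInf_nat_eq_coe_iff {q : ℕ → Prop} {n : ℕ} :
    (⨅ (k : ℕ) (_ : q k), (k : ℕ∞)) = (n : ℕ∞) ↔ q n ∧ ∀ m < n, ¬ q m := by
  constructor
  · intro h
    classical
    have hex : ∃ k, q k := by
      by_contra hne
      push_neg at hne
      simp only [hne, iInf_false, iInf_top] at h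
      exact (ENat.coe_ne_top n) h.symm
    have key : (⨅ (k : ℕ) (_ : q k), (k : ℕ∞)) = ((Nat.find hex : ℕ) : ℕ∞) := by
      refine le_antisymm (iInf₂_le _ (Nat.find_spec hex)) ?_
      refine le_iInf₂ fun k hk => ?_
      exact_mod_cast Nat.find_min' hex hk
    have hn : n = Nat.find hex := by
      have := h.symm.trans key
      exact_mod_cast this
    subst hn
    exact ⟨Nat.find_spec hex, fun m hm => Nat.find_min hex hm⟩
  · rintro ⟨hqn, hmin⟩
    refine le_antisymm (iInf₂_le _ hqn) (le_iInf₂ fun k hk => ?_)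
    have : n ≤ k := le_of_not_gt fun hlt => hmin k hlt hk
    exact_mod_cast this

lemma ladder_zero {J : Type*} (ω : ℕ → J × ℝ) : ladder ω 0 = 0 := rfl

lemma ladder_succ_eq_iff {J : Type*} (ω : ℕ → J × ℝ) (k n : ℕ) :
    ladder ω (k + 1) = (n : ℕ∞) ↔
      ∃ m : ℕ, ladder ω k = (m : ℕ∞) ∧ m < n ∧ Tsum ω m < Tsum ω n ∧
        ∀ s, m < s → s < n → ¬ Tsum ω m < Tsum ω s := by
  show (⨅ (n' : ℕ) (_ : ∃ m : ℕ, ladder ω k = (m : ℕ∞) ∧ m < n' ∧ Tsum ω m < Tsum ω n'),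
        (n' : ℕ∞)) = (n : ℕ∞) ↔ _
  rw [iInf_nat_eq_coe_iff]
  constructor
  · rintro ⟨⟨m, hm, hmn, hT⟩, hmin⟩
    exact ⟨m, hm, hmn, hT, fun s hms hsn hTs => hmin s hsn ⟨m, hm, hms, hTs⟩⟩
  · rintro ⟨m, hm, hmn, hT, hnone⟩
    refine ⟨⟨m, hm, hmn, hT⟩, ?_⟩
    rintro s hsn ⟨m', hm', hm's, hT'⟩
    have hmm : m' = m := by
      have := hm'.symm.trans hm
      exact_mod_cast this
    subst hmm
    exact hnone s hm's hsn hT'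

lemma ladder_succ_pos {J : Type*} {ω : ℕ → J × ℝ} {k n : ℕ}
    (h : ladder ω (k + 1) = (n : ℕ∞)) : 0 < n := by
  rw [ladder_succ_eq_iff] at h
  obtain ⟨m, _, hmn, _⟩ := h
  omega

lemma Tsum_succ {J : Type*} (ω : ℕ → J × ℝ) (n : ℕ) :
    Tsum ω (n + 1) = Tsum ω n + (ω (n + 1)).2 := by
  unfold Tsum; rw [Finset.sum_range_succ]

lemma Tsum_add_sum {J : Type*} (ω : ℕ → J × ℝ) (m t : ℕ) :
    Tsum ω (m + t) = Tsum ω m + ∑ s ∈ Finset.range t, (ω (m + 1 + s)).2 := by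
  induction t with
  | zero => simp
  | succ t ih =>
    have h1 : m + (t + 1) = (m + t) + 1 := rfl
    rw [h1, Tsum_succ, ih, Finset.sum_range_succ, ← add_assoc]
    have : m + t + 1 = m + 1 + t := by omega
    rw [this]

lemma Tsum_congr {J : Type*} {ω ω' : ℕ → J × ℝ} {n : ℕ} (h : ∀ s ≤ n, ω s = ω' s)
    {t : ℕ} (ht : t ≤ n) : Tsum ω t = Tsum ω' t := by
  unfold Tsum
  refine Finset.sum_congr rfl fun m hm => ?_
  rw [h m (by have := Finset.mem_range.1 hm; omega)]

lemma ladder_congr {J : Type*} {ω ω' : ℕ → J × ℝ} (k : ℕ) {n : ℕ}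
    (h : ∀ s ≤ n, ω s = ω' s) (hl : ladder ω k = (n : ℕ∞)) : ladder ω' k = (n : ℕ∞) := by
  induction k generalizing n with
  | zero => exact hl
  | succ k ih =>
    rw [ladder_succ_eq_iff] at hl ⊢
    obtain ⟨m, hm, hmn, hT, hnone⟩ := hl
    refine ⟨m, ih (fun s hs => h s (le_trans hs hmn.le)) hm, hmn, ?_, ?_⟩
    · rw [← Tsum_congr h hmn.le, ← Tsum_congr h le_rfl]; exact hT
    · intro s hms hsn
      rw [← Tsum_congr h hmn.le, ← Tsum_congr h hsn.le]; exact hnone s hms hsn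

lemma measurable_Tsum {J : Type*} [MeasurableSpace J] (n : ℕ) :
    Measurable fun ω : ℕ → J × ℝ => Tsum ω n := by
  unfold Tsum
  exact Finset.measurable_sum _ fun m _ => (measurable_pi_apply m).snd

lemma measurableSet_ladder {J : Type*} [MeasurableSpace J] (k n : ℕ) :
    MeasurableSet {ω : ℕ → J × ℝ | ladder ω k = (n : ℕ∞)} := by
  induction k generalizing n with
  | zero =>
    by_cases h : n = 0
    · subst h
      convert MeasurableSet.univ
      ext ω; simp [ladder_zero]
    · convert MeasurableSet.empty
      ext ω
      simp only [Set.mem_setOf_eq, ladder_zero, Set.mem_empty_iff_false, iff_false]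
      intro hh
      exact h (by exact_mod_cast hh.symm)
  | succ k ih =>
    have hset : {ω : ℕ → J × ℝ | ladder ω (k + 1) = (n : ℕ∞)}
        = ⋃ (m : ℕ) (_ : m < n), ({ω : ℕ → J × ℝ | ladder ω k = (m : ℕ∞)}
            ∩ {ω | Tsum ω m < Tsum ω n}
            ∩ ⋂ (s : ℕ) (_ : m < s) (_ : s < n), {ω | Tsum ω m < Tsum ω s}ᶜ) := by
      ext ω
      simp only [Set.mem_setOf_eq, ladder_succ_eq_iff, Set.mem_iUnion, Set.mem_inter_iff,
        Set.mem_iInter, Set.mem_compl_iff, Set.mem_setOf_eq]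
      constructor
      · rintro ⟨m, hm, hmn, hT, hnone⟩
        exact ⟨m, hmn, ⟨hm, hT⟩, fun s hms hsn => hnone s hms hsn⟩
      · rintro ⟨m, hmn, ⟨hm, hT⟩, hnone⟩
        exact ⟨m, hm, hmn, hT, fun s hms hsn => hnone s hms hsn⟩
    rw [hset]
    refine MeasurableSet.iUnion fun m => MeasurableSet.iUnion fun _ => ?_
    refine ((ih m).inter (measurableSet_lt (measurable_Tsum m) (measurable_Tsum n))).inter ?_
    exact MeasurableSet.iInter fun s => MeasurableSet.iInter fun _ => MeasurableSet.iInter fun _ =>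
      (measurableSet_lt (measurable_Tsum m) (measurable_Tsum s)).compl

end Stmt8

section MarkovCore

open Set

variable {J : Type*} [Fintype J] [DecidableEq J] [Nonempty J]
  [MeasurableSpace J] [MeasurableSingletonClass J]

/-- the event `J_n = j` -/
def Jset (n : ℕ) (j : J) : Set (ℕ → J × ℝ) := {ω | (ω n).1 = j}

lemma measurableSet_Jset (n : ℕ) (j : J) : MeasurableSet (Jset n j : Set (ℕ → J × ℝ)) :=
  (measurable_pi_apply n).fst (measurableSet_singleton j)

lemma Jset_congr {n : ℕ} {j : J} {ω ω' : ℕ → J × ℝ} (h : ω n = ω' n) :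
    ω ∈ (Jset n j : Set (ℕ → J × ℝ)) ↔ ω' ∈ (Jset n j : Set (ℕ → J × ℝ)) := by
  simp only [Jset, Set.mem_setOf_eq, h]

/-- future cylinder constraint on coordinates `base+1, ..., base+r` -/
def Dfut (base r : ℕ) (A : ℕ → Set (J × ℝ)) : Set (ℕ → J × ℝ) :=
  {ω | ∀ s < r, ω (base + 1 + s) ∈ A s}

lemma measurableSet_Dfut (base r : ℕ) (A : ℕ → Set (J × ℝ)) (hA : ∀ s, MeasurableSet (A s)) :
    MeasurableSet (Dfut base r A) := by
  have : Dfut base r A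
      = ⋂ (s : ℕ) (_ : s < r), (fun ω : ℕ → J × ℝ => ω (base + 1 + s)) ⁻¹' A s := by
    ext ω; simp [Dfut]
  rw [this]
  exact MeasurableSet.iInter fun s => MeasurableSet.iInter fun _ =>
    (measurable_pi_apply _) (hA s)

lemma Dfut_succ (base r : ℕ) (A : ℕ → Set (J × ℝ)) :
    Dfut base (r + 1) A = Dfut base r A ∩ {ω | ω (base + 1 + r) ∈ A r} := by
  ext ω
  simp only [Dfut, Set.mem_setOf_eq, Set.mem_inter_iff]
  constructor
  · intro h
    exact ⟨fun s hs => h s (by omega), h r (by omega)⟩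
  · rintro ⟨h1, h2⟩ s hs
    rcases Nat.lt_succ_iff_lt_or_eq.1 hs with h | h
    · exact h1 s h
    · subst h; exact h2

variable (p : J → J → ℝ≥0∞) (μ : J → J → MeasureTheory.Measure ℝ)
  (P : J → MeasureTheory.Measure (ℕ → J × ℝ))

section WithHyp

variable (hPprob : ∀ i, MeasureTheory.IsProbabilityMeasure (P i))
  (hinit : ∀ i, P i {ω | ω 0 = (i, 0)} = 1)
  (hstep : ∀ i : J, ∀ n : ℕ, ∀ C : Set (ℕ → J × ℝ),
      MeasurableSet C →
      (∀ ω ω' : ℕ → J × ℝ, (∀ m ≤ n, ω m = ω' m) → (ω ∈ C ↔ ω' ∈ C)) →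
      ∀ k : J, ∀ B : Set ℝ, MeasurableSet B →
        P i (C ∩ {ω | (ω (n + 1)).1 = k ∧ (ω (n + 1)).2 ∈ B})
          = ∑ j, p j k * μ j k B * P i (C ∩ {ω | (ω n).1 = j}))

include hPprob hinit in
lemma P_J0 (l j : J) : P l (Jset 0 j) = if j = l then 1 else 0 := by
  haveI := hPprob l
  have hms : MeasurableSet {ω : ℕ → J × ℝ | ω 0 = (l, 0)} := by
    have : {ω : ℕ → J × ℝ | ω 0 = (l, 0)} = (fun ω : ℕ → J × ℝ => ω 0) ⁻¹' ({l} ×ˢ {(0:ℝ)}) := by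
      ext ω
      simp [Set.prod_eq, Prod.ext_iff]
    rw [this]
    exact (measurable_pi_apply 0) ((measurableSet_singleton l).prod (measurableSet_singleton 0))
  by_cases h : j = l
  · rw [if_pos h, h]
    refine le_antisymm MeasureTheory.prob_le_one ?_
    calc (1:ENNReal) = P l {ω | ω 0 = (l, 0)} := (hinit l).symm
      _ ≤ P l (Jset 0 l) := MeasureTheory.measure_mono (by
          intro ω hω
          simp only [Set.mem_setOf_eq] at hω
          simp [Jset, hω])
  · rw [if_neg h]
    have hc : P l {ω : ℕ → J × ℝ | ω 0 = (l, 0)}ᶜ = 0 := by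
      rw [MeasureTheory.prob_compl_eq_zero_iff hms]
      exact hinit l
    refine MeasureTheory.measure_mono_null ?_ hc
    intro ω hω
    simp only [Jset, Set.mem_setOf_eq] at hω
    simp only [Set.mem_compl_iff, Set.mem_setOf_eq]
    intro h0
    rw [h0] at hω
    exact h hω.symm

include hPprob hinit hstep in
lemma keyT (i l : J) (m : ℕ) (C : Set (ℕ → J × ℝ)) (hC : MeasurableSet C)
    (hdep : ∀ ω ω' : ℕ → J × ℝ, (∀ s ≤ m, ω s = ω' s) → (ω ∈ C ↔ ω' ∈ C))
    (r : ℕ) (A : ℕ → Set (J × ℝ)) (hA : ∀ s, MeasurableSet (A s)) (j : J) :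
    P i (C ∩ Jset m l ∩ Dfut m r A ∩ Jset (m + r) j)
      = P i (C ∩ Jset m l) * P l (Dfut 0 r A ∩ Jset r j) := by
  induction r generalizing j with
  | zero =>
    have hD : ∀ b, Dfut b 0 A = Set.univ := fun b => by ext ω; simp [Dfut]
    rw [hD, hD, Set.inter_univ, Set.univ_inter, Nat.add_zero]
    rw [P_J0 P hPprob hinit l j]
    by_cases h : j = l
    · subst h
      rw [if_pos rfl, mul_one]
      congr 1
      ext ω; simp only [Set.mem_inter_iff]; tauto
    · rw [if_neg h, mul_zero]
      have hemp : C ∩ Jset m l ∩ Jset m j = (∅ : Set (ℕ → J × ℝ)) := by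
        ext ω
        simp only [Set.mem_inter_iff, Jset, Set.mem_setOf_eq, Set.mem_empty_iff_false, iff_false]
        rintro ⟨⟨-, h1⟩, h2⟩
        exact h (h2.symm.trans h1)
      rw [hemp]
      exact MeasureTheory.measure_empty
  | succ r ih =>
    set B : Set ℝ := {y | (j, y) ∈ A r} with hBdef
    have hB : MeasurableSet B := measurable_prodMk_left (hA r)
    have hsplit : ∀ b, Dfut b (r + 1) A ∩ Jset (b + (r + 1)) j
        = Dfut b r A ∩ {ω | (ω (b + r + 1)).1 = j ∧ (ω (b + r + 1)).2 ∈ B} := by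
      intro b
      rw [Dfut_succ]
      ext ω
      have hco : b + 1 + r = b + r + 1 := by omega
      have hco2 : b + (r + 1) = b + r + 1 := by omega
      simp only [Set.mem_inter_iff, Set.mem_setOf_eq, Jset, hco, hco2, hBdef]
      constructor
      · rintro ⟨⟨h1, h2⟩, h3⟩
        refine ⟨h1, h3, ?_⟩
        have : (ω (b+r+1)) = (j, (ω (b+r+1)).2) := by
          rw [← h3]
        rw [← this]; exact h2
      · rintro ⟨h1, h2, h3⟩
        refine ⟨⟨h1, ?_⟩, h2⟩
        have : (ω (b+r+1)) = (j, (ω (b+r+1)).2) := by rw [← h2]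
        rw [this]; exact h3
    have hCm : MeasurableSet (C ∩ Jset m l ∩ Dfut m r A) :=
      (hC.inter (measurableSet_Jset m l)).inter (measurableSet_Dfut m r A hA)
    have hCdep : ∀ ω ω' : ℕ → J × ℝ, (∀ s ≤ m + r, ω s = ω' s) →
        (ω ∈ C ∩ Jset m l ∩ Dfut m r A ↔ ω' ∈ C ∩ Jset m l ∩ Dfut m r A) := by
      intro ω ω' hagree
      simp only [Set.mem_inter_iff]
      have h1 := hdep ω ω' (fun s hs => hagree s (by omega))
      have h2 := Jset_congr (n := m) (j := l) (hagree m (by omega))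
      have h3 : ω ∈ Dfut m r A ↔ ω' ∈ Dfut m r A := by
        simp only [Dfut, Set.mem_setOf_eq]
        constructor
        · intro h s hs; rw [← hagree (m+1+s) (by omega)]; exact h s hs
        · intro h s hs; rw [hagree (m+1+s) (by omega)]; exact h s hs
      tauto
    have hL := hstep i (m + r) (C ∩ Jset m l ∩ Dfut m r A) hCm hCdep j B hB
    have hDr : MeasurableSet (Dfut 0 r A) := measurableSet_Dfut 0 r A hA
    have hDdep : ∀ ω ω' : ℕ → J × ℝ, (∀ s ≤ r, ω s = ω' s) →
        (ω ∈ Dfut 0 r A ↔ ω' ∈ Dfut 0 r A) := by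
      intro ω ω' hagree
      simp only [Dfut, Set.mem_setOf_eq]
      constructor
      · intro h s hs; rw [← hagree (0+1+s) (by omega)]; exact h s hs
      · intro h s hs; rw [hagree (0+1+s) (by omega)]; exact h s hs
    have hR := hstep l r (Dfut 0 r A) hDr hDdep j B hB
    have e1 : C ∩ Jset m l ∩ Dfut m (r + 1) A ∩ Jset (m + (r + 1)) j
        = C ∩ Jset m l ∩ Dfut m r A ∩ {ω | (ω (m + r + 1)).1 = j ∧ (ω (m + r + 1)).2 ∈ B} := by
      rw [Set.inter_assoc (C ∩ Jset m l), hsplit m, ← Set.inter_assoc]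
    have e2 : Dfut 0 (r + 1) A ∩ Jset (r + 1) j
        = Dfut 0 r A ∩ {ω | (ω (r + 1)).1 = j ∧ (ω (r + 1)).2 ∈ B} := by
      have h0 := hsplit 0
      rw [show (0 : ℕ) + (r + 1) = r + 1 by omega, show (0 : ℕ) + r + 1 = r + 1 by omega] at h0
      exact h0
    rw [e1, e2, hL, hR, Finset.mul_sum]
    refine Finset.sum_congr rfl fun j' _ => ?_
    have h3 : C ∩ Jset m l ∩ Dfut m r A ∩ {ω : ℕ → J × ℝ | (ω (m + r)).1 = j'}
        = C ∩ Jset m l ∩ Dfut m r A ∩ Jset (m + r) j' := rfl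
    have h4 : Dfut 0 r A ∩ {ω : ℕ → J × ℝ | (ω r).1 = j'} = Dfut 0 r A ∩ Jset r j' := rfl
    rw [h3, h4, ih j']
    ring


include hPprob hinit hstep in
lemma measure_partition (i : J) (E : Set (ℕ → J × ℝ)) (hE : MeasurableSet E) (n : ℕ) :
    P i E = ∑ j : J, P i (E ∩ Jset n j) := by
  have hU : E = ⋃ j : J, E ∩ Jset n j := by
    ext ω
    simp only [Set.mem_iUnion, Set.mem_inter_iff, Jset, Set.mem_setOf_eq]
    exact ⟨fun h => ⟨(ω n).1, h, rfl⟩, fun ⟨j, h, _⟩ => h⟩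
  conv_lhs => rw [hU]
  rw [MeasureTheory.measure_iUnion ?hd (fun j => hE.inter (measurableSet_Jset n j))]
  · exact tsum_fintype _
  · intro j j' hne
    refine Set.disjoint_left.2 fun ω h1 h2 => hne ?_
    exact h1.2.symm.trans h2.2

/-- the map extracting the `r` coordinates after position `m` -/
def Φmap (m r : ℕ) : (ℕ → J × ℝ) → (Fin r → J × ℝ) := fun ω s => ω (m + 1 + s)

lemma measurable_Φmap (m r : ℕ) : Measurable (Φmap (J := J) m r) :=
  measurable_pi_lambda _ fun _ => measurable_pi_apply _

include hPprob hinit hstep in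
lemma keyMeas (i l : J) (m : ℕ) (C : Set (ℕ → J × ℝ)) (hC : MeasurableSet C)
    (hdep : ∀ ω ω' : ℕ → J × ℝ, (∀ s ≤ m, ω s = ω' s) → (ω ∈ C ↔ ω' ∈ C))
    (r : ℕ) (S : Set (Fin r → J × ℝ)) (hS : MeasurableSet S) :
    P i (C ∩ Jset m l ∩ Φmap m r ⁻¹' S)
      = P i (C ∩ Jset m l) * P l (Φmap 0 r ⁻¹' S) := by
  haveI := hPprob i
  haveI := hPprob l
  set ν₁ : MeasureTheory.Measure (Fin r → J × ℝ) :=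
    MeasureTheory.Measure.map (Φmap m r) ((P i).restrict (C ∩ Jset m l)) with hν₁
  set ν₂ : MeasureTheory.Measure (Fin r → J × ℝ) :=
    (P i (C ∩ Jset m l)) • MeasureTheory.Measure.map (Φmap 0 r) (P l) with hν₂
  have hCJ : MeasurableSet (C ∩ Jset m l) := hC.inter (measurableSet_Jset m l)
  have hfin1 : MeasureTheory.IsFiniteMeasure ((P i).restrict (C ∩ Jset m l)) := by
    constructor
    rw [MeasureTheory.Measure.restrict_apply_univ]
    exact MeasureTheory.measure_lt_top _ _
  have hν₁app : ∀ S' : Set (Fin r → J × ℝ), MeasurableSet S' →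
      ν₁ S' = P i (C ∩ Jset m l ∩ Φmap m r ⁻¹' S') := by
    intro S' hS'
    rw [hν₁, MeasureTheory.Measure.map_apply (measurable_Φmap m r) hS',
      MeasureTheory.Measure.restrict_apply ((measurable_Φmap m r) hS'), Set.inter_comm]
  have hν₂app : ∀ S' : Set (Fin r → J × ℝ), MeasurableSet S' →
      ν₂ S' = P i (C ∩ Jset m l) * P l (Φmap 0 r ⁻¹' S') := by
    intro S' hS'
    rw [hν₂, MeasureTheory.Measure.smul_apply, smul_eq_mul,
      MeasureTheory.Measure.map_apply (measurable_Φmap 0 r) hS']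
  have hfin : MeasureTheory.IsFiniteMeasure ν₁ := by
    constructor
    rw [hν₁app Set.univ MeasurableSet.univ]
    exact MeasureTheory.measure_lt_top _ _
  have heq : ν₁ = ν₂ := by
    refine MeasureTheory.ext_of_generate_finite _ generateFrom_pi.symm
      isPiSystem_pi ?_ ?_
    · rintro S' ⟨A', hA', rfl⟩
      simp only [Set.mem_univ_pi, Set.mem_setOf_eq] at hA'
      classical
      set A'' : ℕ → Set (J × ℝ) := fun s => if h : s < r then A' ⟨s, h⟩ else Set.univ with hA''
      have hA''m : ∀ s, MeasurableSet (A'' s) := by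
        intro s
        by_cases h : s < r
        · simpa [hA'', h] using hA' ⟨s, h⟩
        · simp [hA'', h]
      have hbox : ∀ b, Φmap (J := J) b r ⁻¹' Set.pi Set.univ A' = Dfut b r A'' := by
        intro b
        ext ω
        simp only [Set.mem_preimage, Set.mem_univ_pi, Dfut, Set.mem_setOf_eq, Φmap]
        constructor
        · intro h s hs
          have := h ⟨s, hs⟩
          simpa [hA'', hs] using this
        · intro h s
          have := h s.1 s.2
          simpa [hA'', s.2, Fin.eta] using this
      have hSm : MeasurableSet (Set.pi Set.univ A') :=
        MeasurableSet.univ_pi fun s => hA' s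
      rw [hν₁app _ hSm, hν₂app _ hSm, hbox, hbox]
      have hDm : MeasurableSet (C ∩ Jset m l ∩ Dfut m r A'') :=
        hCJ.inter (measurableSet_Dfut m r A'' hA''m)
      rw [measure_partition p μ P hPprob hinit hstep i _ hDm (m + r)]
      have hDm0 : MeasurableSet (Dfut 0 r A'' : Set (ℕ → J × ℝ)) :=
        measurableSet_Dfut 0 r A'' hA''m
      rw [measure_partition p μ P hPprob hinit hstep l _ hDm0 r]
      rw [Finset.mul_sum]
      refine Finset.sum_congr rfl fun j _ => ?_
      exact keyT p μ P hPprob hinit hstep i l m C hC hdep r A'' hA''m j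
    · rw [hν₁app _ MeasurableSet.univ, hν₂app _ MeasurableSet.univ]
      simp
  rw [← hν₁app S hS, heq, hν₂app S hS]

/-- restriction to the first `m+1` coordinates -/
def πmap (m : ℕ) : (ℕ → J × ℝ) → (Fin (m + 1) → J × ℝ) := fun ω s => ω s

lemma measurable_πmap (m : ℕ) : Measurable (πmap (J := J) m) :=
  measurable_pi_lambda _ fun _ => measurable_pi_apply _

include hPprob hinit hstep in
lemma keyM (i l : J) (m : ℕ) (f : (ℕ → J × ℝ) → ℝ≥0∞) (hf : Measurable f)
    (hfdep : ∀ ω ω' : ℕ → J × ℝ, (∀ s ≤ m, ω s = ω' s) → f ω = f ω')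
    (r : ℕ) (g : (Fin r → J × ℝ) → ℝ≥0∞) (hg : Measurable g) :
    ∫⁻ ω in Jset m l, f ω * g (Φmap m r ω) ∂(P i)
      = (∫⁻ ω in Jset m l, f ω ∂(P i)) * ∫⁻ ω, g (Φmap 0 r ω) ∂(P l) := by
  haveI := hPprob i
  haveI := hPprob l
  have hJne : Nonempty (J × ℝ) := inferInstance
  set emb : (Fin (m + 1) → J × ℝ) → (ℕ → J × ℝ) :=
    fun v n => if h : n < m + 1 then v ⟨n, h⟩ else Classical.arbitrary _ with hemb
  have hembm : Measurable emb := by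
    refine measurable_pi_lambda _ fun n => ?_
    by_cases h : n < m + 1
    · rw [hemb]; simp only [dif_pos h]; exact measurable_pi_apply _
    · rw [hemb]; simp only [dif_neg h]; exact measurable_const
  set F : (Fin (m + 1) → J × ℝ) → ℝ≥0∞ := f ∘ emb with hF
  have hFm : Measurable F := hf.comp hembm
  have hFπ : ∀ ω, F (πmap m ω) = f ω := by
    intro ω
    refine hfdep _ _ fun s hs => ?_
    simp [hemb, πmap, Nat.lt_succ_of_le hs, hs, not_lt.mpr hs]
  set pairmap : (ℕ → J × ℝ) → (Fin (m + 1) → J × ℝ) × (Fin r → J × ℝ) :=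
    fun ω => (πmap m ω, Φmap m r ω) with hpair
  have hpairm : Measurable pairmap := (measurable_πmap m).prodMk (measurable_Φmap m r)
  set ρ₁ : MeasureTheory.Measure (Fin (m + 1) → J × ℝ) :=
    MeasureTheory.Measure.map (πmap m) ((P i).restrict (Jset m l)) with hρ₁
  set ρ₂ : MeasureTheory.Measure (Fin r → J × ℝ) :=
    MeasureTheory.Measure.map (Φmap 0 r) (P l) with hρ₂
  have hfin1 : MeasureTheory.IsFiniteMeasure ρ₁ := by
    constructor
    rw [hρ₁, MeasureTheory.Measure.map_apply (measurable_πmap m) MeasurableSet.univ]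
    exact lt_of_le_of_lt (MeasureTheory.Measure.restrict_apply_le _ _) (MeasureTheory.measure_lt_top _ _)
  have hfin2 : MeasureTheory.IsFiniteMeasure ρ₂ := by
    constructor
    rw [hρ₂, MeasureTheory.Measure.map_apply (measurable_Φmap 0 r) MeasurableSet.univ]
    exact MeasureTheory.measure_lt_top _ _
  have hprodeq : ρ₁.prod ρ₂ = MeasureTheory.Measure.map pairmap ((P i).restrict (Jset m l)) := by
    refine MeasureTheory.Measure.prod_eq fun A S hA hS => ?_
    rw [MeasureTheory.Measure.map_apply hpairm (hA.prod hS)]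
    have hpre : pairmap ⁻¹' (A ×ˢ S) = (πmap m ⁻¹' A) ∩ (Φmap m r ⁻¹' S) := by
      ext ω; simp [hpair, Set.mem_prod]
    rw [hpre, MeasureTheory.Measure.restrict_apply
      (((measurable_πmap m) hA).inter ((measurable_Φmap m r) hS))]
    have hre : πmap m ⁻¹' A ∩ Φmap m r ⁻¹' S ∩ Jset m l
        = (πmap m ⁻¹' A) ∩ Jset m l ∩ Φmap m r ⁻¹' S := by
      ext ω; simp only [Set.mem_inter_iff]; tauto
    rw [hre, keyMeas p μ P hPprob hinit hstep i l m (πmap m ⁻¹' A)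
      ((measurable_πmap m) hA) ?_ r S hS]
    · congr 1
      · rw [hρ₁, MeasureTheory.Measure.map_apply (measurable_πmap m) hA,
          MeasureTheory.Measure.restrict_apply ((measurable_πmap m) hA)]
      · rw [hρ₂, MeasureTheory.Measure.map_apply (measurable_Φmap 0 r) hS]
    · intro ω ω' hagree
      have : πmap (J := J) m ω = πmap m ω' := by
        funext s
        exact hagree s (Nat.lt_succ_iff.1 s.2)
      simp [Set.mem_preimage, this]
  have hstep1 : ∫⁻ ω in Jset m l, f ω * g (Φmap m r ω) ∂(P i)
      = ∫⁻ z, F z.1 * g z.2 ∂(MeasureTheory.Measure.map pairmap ((P i).restrict (Jset m l))) := by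
    have hmeas : Measurable fun z : (Fin (m + 1) → J × ℝ) × (Fin r → J × ℝ) => F z.1 * g z.2 :=
      (hFm.comp measurable_fst).mul (hg.comp measurable_snd)
    rw [MeasureTheory.lintegral_map hmeas hpairm]
    refine MeasureTheory.lintegral_congr fun ω => ?_
    simp [hpair, hFπ ω]
  rw [hstep1, ← hprodeq, MeasureTheory.lintegral_prod_mul hFm.aemeasurable hg.aemeasurable]
  congr 1
  · rw [hρ₁, MeasureTheory.lintegral_map hFm (measurable_πmap m)]
    exact MeasureTheory.lintegral_congr fun ω => hFπ ω
  · rw [hρ₂, MeasureTheory.lintegral_map hg (measurable_Φmap 0 r)]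


section Ladder

noncomputable def evf (θ : ℝ) (n : ℕ) : (ℕ → J × ℝ) → ℝ≥0∞ :=
  fun ω => ENNReal.ofReal (Real.exp (θ * Tsum ω n))

lemma measurable_evf (θ : ℝ) (n : ℕ) : Measurable (evf (J := J) θ n) :=
  (Real.measurable_exp.comp (measurable_const.mul (Stmt8.measurable_Tsum n))).ennreal_ofReal

def Ak (k n : ℕ) : Set (ℕ → J × ℝ) := {ω | ladder ω k = (n : ℕ∞)}

lemma measurableSet_Ak (k n : ℕ) : MeasurableSet (Ak (J := J) k n) :=
  Stmt8.measurableSet_ladder k n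

def Emn (m n : ℕ) : Set (ℕ → J × ℝ) :=
  {ω | Tsum ω m < Tsum ω n ∧ ∀ s, m < s → s < n → ¬ Tsum ω m < Tsum ω s}

lemma measurableSet_Emn (m n : ℕ) : MeasurableSet (Emn (J := J) m n) := by
  have h : Emn (J := J) m n = {ω : ℕ → J × ℝ | Tsum ω m < Tsum ω n}
      ∩ ⋂ (s : ℕ) (_ : m < s) (_ : s < n), {ω : ℕ → J × ℝ | Tsum ω m < Tsum ω s}ᶜ := by
    ext ω
    simp only [Emn, Set.mem_inter_iff, Set.mem_setOf_eq, Set.mem_iInter, Set.mem_compl_iff,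
      Set.mem_setOf_eq]
  rw [h]
  refine (measurableSet_lt (Stmt8.measurable_Tsum m) (Stmt8.measurable_Tsum n)).inter ?_
  exact MeasurableSet.iInter fun s => MeasurableSet.iInter fun _ => MeasurableSet.iInter fun _ =>
    (measurableSet_lt (Stmt8.measurable_Tsum m) (Stmt8.measurable_Tsum s)).compl

noncomputable def Gmat (θ : ℝ) (i : J) (k : ℕ) (j : J) : ℝ≥0∞ :=
  ∑' n, ∫⁻ ω in Ak k n ∩ Jset n j, evf θ n ω ∂(P i)

noncomputable def psum (r : ℕ) (v : Fin (r + 1) → J × ℝ) (t : ℕ) : ℝ :=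
  ∑ s ∈ Finset.range t, if h : s < r + 1 then (v ⟨s, h⟩).2 else 0

lemma measurable_psum (r t : ℕ) : Measurable fun v : Fin (r + 1) → J × ℝ => psum r v t := by
  unfold psum
  refine Finset.measurable_sum _ fun s _ => ?_
  by_cases h : s < r + 1
  · simpa [h] using (measurable_pi_apply (⟨s, h⟩ : Fin (r + 1))).snd
  · simpa [h] using measurable_const

def gset (r : ℕ) (j : J) : Set (Fin (r + 1) → J × ℝ) :=
  {v | (0 < psum r v (r + 1) ∧ ∀ s, 0 < s → s < r + 1 → ¬ 0 < psum r v s)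
    ∧ (v (Fin.last r)).1 = j}

lemma measurableSet_gset (r : ℕ) (j : J) : MeasurableSet (gset (J := J) r j) := by
  have h : gset (J := J) r j
      = ({v : Fin (r+1) → J × ℝ | 0 < psum r v (r + 1)}
          ∩ ⋂ (s : ℕ) (_ : 0 < s) (_ : s < r + 1), {v : Fin (r+1) → J × ℝ | 0 < psum r v s}ᶜ)
        ∩ {v : Fin (r+1) → J × ℝ | (v (Fin.last r)).1 = j} := by
    ext v
    simp only [gset, Set.mem_inter_iff, Set.mem_setOf_eq, Set.mem_iInter, Set.mem_compl_iff,
      Set.mem_setOf_eq]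
  rw [h]
  refine (((measurableSet_lt measurable_const (measurable_psum r (r+1)))).inter ?_).inter
    ((measurable_pi_apply (Fin.last r)).fst (measurableSet_singleton j))
  exact MeasurableSet.iInter fun s => MeasurableSet.iInter fun _ => MeasurableSet.iInter fun _ =>
    (measurableSet_lt measurable_const (measurable_psum r s)).compl

noncomputable def gfun (θ : ℝ) (r : ℕ) (j : J) : (Fin (r + 1) → J × ℝ) → ℝ≥0∞ :=
  (gset r j).indicator fun v => ENNReal.ofReal (Real.exp (θ * psum r v (r + 1)))

lemma measurable_gfun (θ : ℝ) (r : ℕ) (j : J) : Measurable (gfun (J := J) θ r j) :=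
  Measurable.indicator
    ((Real.measurable_exp.comp (measurable_const.mul (measurable_psum r (r+1)))).ennreal_ofReal)
    (measurableSet_gset r j)

lemma psum_Φ (m r : ℕ) (ω : ℕ → J × ℝ) {t : ℕ} (ht : t ≤ r + 1) :
    psum r (Φmap m (r + 1) ω) t = Tsum ω (m + t) - Tsum ω m := by
  have h1 : psum r (Φmap m (r + 1) ω) t = ∑ s ∈ Finset.range t, (ω (m + 1 + s)).2 := by
    unfold psum
    refine Finset.sum_congr rfl fun s hs => ?_
    have hst : s < r + 1 := lt_of_lt_of_le (Finset.mem_range.1 hs) ht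
    rw [dif_pos hst]
    rfl
  rw [h1, Stmt8.Tsum_add_sum]
  ring

lemma Φ_last (m r : ℕ) (ω : ℕ → J × ℝ) :
    Φmap m (r + 1) ω (Fin.last r) = ω (m + (r + 1)) := by
  show ω (m + 1 + (Fin.last r).val) = _
  rw [Fin.val_last]
  congr 1
  omega

lemma mem_gset_Φ (m r : ℕ) (j : J) (ω : ℕ → J × ℝ) :
    Φmap m (r + 1) ω ∈ gset r j ↔
      ω ∈ Emn m (m + (r + 1)) ∩ Jset (m + (r + 1)) j := by
  unfold gset Emn Jset
  simp only [Set.mem_setOf_eq, Set.mem_inter_iff]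
  rw [Φ_last]
  constructor
  · rintro ⟨⟨h1, h2⟩, h3⟩
    rw [psum_Φ m r ω le_rfl] at h1
    refine ⟨⟨by linarith, ?_⟩, h3⟩
    intro s hms hsn hT
    have h4 := h2 (s - m) (by omega) (by omega)
    rw [psum_Φ m r ω (by omega : s - m ≤ r + 1), show m + (s - m) = s by omega] at h4
    exact h4 (by linarith)
  · rintro ⟨⟨h1, h2⟩, h3⟩
    refine ⟨⟨?_, ?_⟩, h3⟩
    · rw [psum_Φ m r ω le_rfl]; linarith
    · intro s hs hsr hT
      rw [psum_Φ m r ω hsr.le] at hT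
      exact h2 (m + s) (by omega) (by omega) (by linarith)

lemma indicator_dep (θ : ℝ) (k m : ℕ) {ω ω' : ℕ → J × ℝ} (h : ∀ s ≤ m, ω s = ω' s) :
    (Ak (J := J) k m).indicator (evf θ m) ω = (Ak k m).indicator (evf θ m) ω' := by
  have hiff : ω ∈ Ak (J := J) k m ↔ ω' ∈ Ak k m :=
    ⟨fun hω => Stmt8.ladder_congr k h hω,
     fun hω => Stmt8.ladder_congr k (fun s hs => (h s hs).symm) hω⟩
  have hev : evf θ m ω = evf (J := J) θ m ω' := by
    unfold evf
    rw [Stmt8.Tsum_congr h le_rfl]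
  by_cases hω : ω ∈ Ak (J := J) k m
  · rw [Set.indicator_of_mem hω, Set.indicator_of_mem (hiff.1 hω), hev]
  · rw [Set.indicator_of_notMem hω, Set.indicator_of_notMem (fun hc => hω (hiff.2 hc))]

lemma bridge (θ : ℝ) (i l j : J) (k m r : ℕ) :
    ∫⁻ ω in Ak k m ∩ Emn m (m + (r + 1)) ∩ Jset (m + (r + 1)) j ∩ Jset m l,
        evf θ (m + (r + 1)) ω ∂(P i)
      = ∫⁻ ω in Jset m l,
          ((Ak k m).indicator (evf θ m) ω) * gfun θ r j (Φmap m (r + 1) ω) ∂(P i) := by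
  have hbig : MeasurableSet
      (Ak (J := J) k m ∩ Emn m (m + (r + 1)) ∩ Jset (m + (r + 1)) j ∩ Jset m l) :=
    (((measurableSet_Ak k m).inter (measurableSet_Emn _ _)).inter
      (measurableSet_Jset _ j)).inter (measurableSet_Jset m l)
  rw [← MeasureTheory.lintegral_indicator hbig _,
    ← MeasureTheory.lintegral_indicator (measurableSet_Jset m l) _]
  refine MeasureTheory.lintegral_congr fun ω => ?_
  by_cases hl : ω ∈ (Jset m l : Set (ℕ → J × ℝ))
  · by_cases hAk : ω ∈ Ak (J := J) k m
    · by_cases hg : Φmap m (r + 1) ω ∈ gset r j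
      · have hEJ := (mem_gset_Φ m r j ω).1 hg
        have hmem : ω ∈ Ak (J := J) k m ∩ Emn m (m + (r+1)) ∩ Jset (m + (r+1)) j ∩ Jset m l :=
          ⟨⟨⟨hAk, hEJ.1⟩, hEJ.2⟩, hl⟩
        rw [Set.indicator_of_mem hmem, Set.indicator_of_mem hl, Set.indicator_of_mem hAk,
          gfun, Set.indicator_of_mem hg, psum_Φ m r ω le_rfl]
        unfold evf
        rw [← ENNReal.ofReal_mul (le_of_lt (Real.exp_pos _)), ← Real.exp_add]
        congr 2
        ring
      · have hmem : ω ∉ Ak (J := J) k m ∩ Emn m (m + (r+1)) ∩ Jset (m + (r+1)) j ∩ Jset m l := by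
          intro hmem
          exact hg ((mem_gset_Φ m r j ω).2 ⟨hmem.1.1.2, hmem.1.2⟩)
        rw [Set.indicator_of_notMem hmem, Set.indicator_of_mem hl, gfun,
          Set.indicator_of_notMem hg, mul_zero]
    · have hmem : ω ∉ Ak (J := J) k m ∩ Emn m (m + (r+1)) ∩ Jset (m + (r+1)) j ∩ Jset m l :=
        fun hmem => hAk hmem.1.1.1
      rw [Set.indicator_of_notMem hmem, Set.indicator_of_mem hl,
        Set.indicator_of_notMem hAk, zero_mul]
  · have hmem : ω ∉ Ak (J := J) k m ∩ Emn m (m + (r+1)) ∩ Jset (m + (r+1)) j ∩ Jset m l :=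
      fun hmem => hl hmem.2
    rw [Set.indicator_of_notMem hmem, Set.indicator_of_notMem hl]

include hPprob hinit in
lemma gint (θ : ℝ) (l j : J) (r : ℕ) :
    ∫⁻ ω, gfun θ r j (Φmap 0 (r + 1) ω) ∂(P l)
      = ∫⁻ ω in Ak 1 (r + 1) ∩ Jset (r + 1) j, evf θ (r + 1) ω ∂(P l) := by
  haveI := hPprob l
  have hms : MeasurableSet {ω : ℕ → J × ℝ | ω 0 = (l, 0)} := by
    have h : {ω : ℕ → J × ℝ | ω 0 = (l, 0)} = (fun ω : ℕ → J × ℝ => ω 0) ⁻¹' ({l} ×ˢ {(0:ℝ)}) := by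
      ext ω
      simp [Set.prod_eq, Prod.ext_iff]
    rw [h]
    exact (measurable_pi_apply 0) ((measurableSet_singleton l).prod (measurableSet_singleton 0))
  have hae : ∀ᵐ ω ∂(P l), ω 0 = (l, 0) := by
    rw [MeasureTheory.ae_iff]
    have he : {ω : ℕ → J × ℝ | ¬ ω 0 = (l, 0)} = {ω : ℕ → J × ℝ | ω 0 = (l, 0)}ᶜ := rfl
    rw [he, MeasureTheory.prob_compl_eq_zero_iff hms]
    exact hinit l
  have hiff : ∀ ω : ℕ → J × ℝ, Φmap 0 (r + 1) ω ∈ gset r j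
      ↔ ω ∈ Ak (J := J) 1 (r + 1) ∩ Jset (r + 1) j := by
    intro ω
    rw [mem_gset_Φ 0 r j ω]
    have h0 : (0 : ℕ) + (r + 1) = r + 1 := by omega
    rw [h0]
    simp only [Ak, Emn, Jset, Set.mem_inter_iff, Set.mem_setOf_eq]
    constructor
    · rintro ⟨⟨h1, h2⟩, h3⟩
      refine ⟨(Stmt8.ladder_succ_eq_iff ω 0 (r + 1)).2 ⟨0, ?_, by omega, h1, h2⟩, h3⟩
      rw [Stmt8.ladder_zero]
      norm_cast
    · rintro ⟨h1, h3⟩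
      rw [Stmt8.ladder_succ_eq_iff] at h1
      obtain ⟨m, hm, hmn, hT, hnone⟩ := h1
      have hm0 : m = 0 := by
        rw [Stmt8.ladder_zero] at hm
        exact_mod_cast hm.symm
      subst hm0
      exact ⟨⟨hT, hnone⟩, h3⟩
  have hbig : MeasurableSet (Ak (J := J) 1 (r + 1) ∩ Jset (r + 1) j) :=
    (measurableSet_Ak 1 (r+1)).inter (measurableSet_Jset _ j)
  rw [← MeasureTheory.lintegral_indicator hbig _]
  refine MeasureTheory.lintegral_congr_ae ?_
  filter_upwards [hae] with ω h0
  have hT0 : Tsum ω 0 = 0 := by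
    unfold Tsum
    simp [h0]
  by_cases hg : Φmap 0 (r + 1) ω ∈ gset r j
  · rw [gfun, Set.indicator_of_mem hg, Set.indicator_of_mem ((hiff ω).1 hg),
      psum_Φ 0 r ω le_rfl]
    unfold evf
    congr 2
    rw [show (0 : ℕ) + (r + 1) = r + 1 by omega, hT0]
    ring
  · rw [gfun, Set.indicator_of_notMem hg,
      Set.indicator_of_notMem (fun hc => hg ((hiff ω).2 hc))]

lemma lintegral_partition (i : J) (E : Set (ℕ → J × ℝ)) (hE : MeasurableSet E) (m : ℕ)
    (f : (ℕ → J × ℝ) → ℝ≥0∞) :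
    ∫⁻ ω in E, f ω ∂(P i) = ∑ l : J, ∫⁻ ω in E ∩ Jset m l, f ω ∂(P i) := by
  have hU : E = ⋃ l : J, E ∩ Jset m l := by
    ext ω
    simp only [Set.mem_iUnion, Set.mem_inter_iff, Jset, Set.mem_setOf_eq]
    exact ⟨fun h => ⟨(ω m).1, h, rfl⟩, fun ⟨l, h, _⟩ => h⟩
  conv_lhs => rw [hU]
  rw [MeasureTheory.lintegral_iUnion (fun l => hE.inter (measurableSet_Jset m l)) ?_ f]
  · exact tsum_fintype _
  · intro l l' hne
    refine Set.disjoint_left.2 fun ω h1 h2 => hne ?_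
    exact h1.2.symm.trans h2.2

lemma Gmat_one_shift (θ : ℝ) (l j : J) :
    Gmat P θ l 1 j
      = ∑' r : ℕ, ∫⁻ ω in Ak 1 (r + 1) ∩ Jset (r + 1) j, evf θ (r + 1) ω ∂(P l) := by
  unfold Gmat
  have hemp : Ak (J := J) 1 0 ∩ Jset 0 j = ∅ := by
    ext ω
    simp only [Ak, Jset, Set.mem_inter_iff, Set.mem_setOf_eq, Set.mem_empty_iff_false, iff_false]
    rintro ⟨h1, -⟩
    have hpos : 0 < 0 := Stmt8.ladder_succ_pos (k := 0) h1
    exact absurd hpos (lt_irrefl 0)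
  refine (Function.Injective.tsum_eq (g := fun r : ℕ => r + 1)
    (fun a b hab => by have h : a + 1 = b + 1 := hab; omega) ?_).symm
  intro n hn
  simp only [Function.mem_support] at hn
  rcases Nat.eq_zero_or_pos n with h0 | hpos
  · exfalso
    apply hn
    rw [h0, hemp]
    simp
  · exact ⟨n - 1, by show n - 1 + 1 = n; omega⟩

include hPprob hinit hstep in
lemma G_rec (θ : ℝ) (i j : J) (k : ℕ) :
    Gmat P θ i (k + 1) j = ∑ l : J, Gmat P θ i k l * Gmat P θ l 1 j := by
  haveI := hPprob i
  have hpiece_meas : ∀ m n : ℕ, MeasurableSet (Ak (J := J) k m ∩ Emn m n ∩ Jset n j) :=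
    fun m n => ((measurableSet_Ak k m).inter (measurableSet_Emn m n)).inter
      (measurableSet_Jset n j)
  have hev : ∀ n : ℕ, Ak (J := J) (k + 1) n ∩ Jset n j
      = ⋃ (m : ℕ) (_ : m < n), (Ak k m ∩ Emn m n ∩ Jset n j) := by
    intro n
    ext ω
    simp only [Ak, Emn, Jset, Set.mem_inter_iff, Set.mem_setOf_eq, Set.mem_iUnion]
    constructor
    · rintro ⟨hl, hj⟩
      rw [Stmt8.ladder_succ_eq_iff] at hl
      obtain ⟨m, hm, hmn, hT, hnone⟩ := hl
      exact ⟨m, hmn, ⟨⟨hm, hT, hnone⟩, hj⟩⟩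
    · rintro ⟨m, hmn, ⟨⟨hm, hT, hnone⟩, hj⟩⟩
      exact ⟨(Stmt8.ladder_succ_eq_iff ω k n).2 ⟨m, hm, hmn, hT, hnone⟩, hj⟩
  have h2' : Gmat P θ i (k + 1) j
      = ∑' (n : ℕ) (m : ℕ), ∫⁻ ω in ⋃ (_ : m < n), (Ak k m ∩ Emn m n ∩ Jset n j),
          evf θ n ω ∂(P i) := by
    unfold Gmat
    refine tsum_congr fun n => ?_
    rw [hev n]
    rw [MeasureTheory.lintegral_iUnion
      (fun m => MeasurableSet.iUnion fun _ => hpiece_meas m n) ?_]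
    intro m m' hne
    refine Set.disjoint_left.2 fun ω h1 h2 => hne ?_
    simp only [Set.mem_iUnion] at h1 h2
    obtain ⟨-, h1⟩ := h1
    obtain ⟨-, h2⟩ := h2
    have e1 : ladder ω k = (m : ℕ∞) := h1.1.1
    have e2 : ladder ω k = (m' : ℕ∞) := h2.1.1
    exact_mod_cast e1.symm.trans e2
  have h2 : Gmat P θ i (k + 1) j
      = ∑' (m : ℕ) (n : ℕ), ∫⁻ ω in ⋃ (_ : m < n), (Ak k m ∩ Emn m n ∩ Jset n j),
          evf θ n ω ∂(P i) := h2'.trans ENNReal.tsum_comm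
  have h3 : ∀ m : ℕ,
      (∑' n : ℕ, ∫⁻ ω in ⋃ (_ : m < n), (Ak k m ∩ Emn m n ∩ Jset n j), evf θ n ω ∂(P i))
      = ∑' r : ℕ, ∫⁻ ω in Ak k m ∩ Emn m (m + (r + 1)) ∩ Jset (m + (r + 1)) j,
          evf θ (m + (r + 1)) ω ∂(P i) := by
    intro m
    have e1 := (Function.Injective.tsum_eq (g := fun r : ℕ => m + (r + 1))
      (f := fun n => ∫⁻ ω in ⋃ (_ : m < n), (Ak (J := J) k m ∩ Emn m n ∩ Jset n j),
          evf θ n ω ∂(P i))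
      (fun a b hab => by have h : m + (a + 1) = m + (b + 1) := hab; omega) ?_).symm
    · rw [e1]
      refine tsum_congr fun r => ?_
      have hlt : m < m + (r + 1) := by omega
      have hU : (⋃ (_ : m < m + (r + 1)),
          (Ak (J := J) k m ∩ Emn m (m + (r + 1)) ∩ Jset (m + (r + 1)) j))
          = Ak k m ∩ Emn m (m + (r + 1)) ∩ Jset (m + (r + 1)) j := by
        ext ω
        simp [hlt]
      rw [hU]
    · intro n hn
      simp only [Function.mem_support] at hn
      by_cases hlt : m < n
      · exact ⟨n - m - 1, by show m + (n - m - 1 + 1) = n; omega⟩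
      · exfalso
        apply hn
        have hU : (⋃ (_ : m < n), (Ak (J := J) k m ∩ Emn m n ∩ Jset n j)) = ∅ := by
          simp [hlt]
        rw [hU]
        simp
  have h4 : ∀ m r : ℕ, ∀ l : J,
      ∫⁻ ω in Ak k m ∩ Emn m (m + (r + 1)) ∩ Jset (m + (r + 1)) j ∩ Jset m l,
          evf θ (m + (r + 1)) ω ∂(P i)
        = (∫⁻ ω in Ak k m ∩ Jset m l, evf θ m ω ∂(P i))
            * ∫⁻ ω in Ak 1 (r + 1) ∩ Jset (r + 1) j, evf θ (r + 1) ω ∂(P l) := by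
    intro m r l
    rw [bridge P θ i l j k m r]
    rw [keyM p μ P hPprob hinit hstep i l m ((Ak k m).indicator (evf θ m))
      ((measurable_evf θ m).indicator (measurableSet_Ak k m))
      (fun ω ω' h => indicator_dep θ k m h) (r + 1) (gfun θ r j) (measurable_gfun θ r j)]
    rw [gint P hPprob hinit θ l j r]
    congr 1
    rw [MeasureTheory.lintegral_indicator (measurableSet_Ak k m) _,
      MeasureTheory.Measure.restrict_restrict (measurableSet_Ak k m)]
  have hstep2 : ∀ m r : ℕ,
      ∫⁻ ω in Ak k m ∩ Emn m (m + (r + 1)) ∩ Jset (m + (r + 1)) j,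
          evf θ (m + (r + 1)) ω ∂(P i)
        = ∑ l : J, (∫⁻ ω in Ak k m ∩ Jset m l, evf θ m ω ∂(P i))
            * ∫⁻ ω in Ak 1 (r + 1) ∩ Jset (r + 1) j, evf θ (r + 1) ω ∂(P l) := by
    intro m r
    rw [lintegral_partition P i _ (hpiece_meas m (m + (r + 1))) m (evf θ (m + (r + 1)))]
    exact Finset.sum_congr rfl fun l _ => h4 m r l
  rw [h2]
  calc ∑' (m : ℕ) (n : ℕ), ∫⁻ ω in ⋃ (_ : m < n), (Ak k m ∩ Emn m n ∩ Jset n j),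
          evf θ n ω ∂(P i)
      = ∑' (m : ℕ) (r : ℕ), ∫⁻ ω in Ak k m ∩ Emn m (m + (r + 1)) ∩ Jset (m + (r + 1)) j,
          evf θ (m + (r + 1)) ω ∂(P i) := tsum_congr h3
    _ = ∑' (m : ℕ) (r : ℕ), ∑ l : J,
          (∫⁻ ω in Ak k m ∩ Jset m l, evf θ m ω ∂(P i))
            * ∫⁻ ω in Ak 1 (r + 1) ∩ Jset (r + 1) j, evf θ (r + 1) ω ∂(P l) :=
        tsum_congr fun m => tsum_congr fun r => hstep2 m r
    _ = ∑' (m : ℕ), ∑ l : J,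
          (∫⁻ ω in Ak k m ∩ Jset m l, evf θ m ω ∂(P i))
            * ∑' (r : ℕ), ∫⁻ ω in Ak 1 (r + 1) ∩ Jset (r + 1) j, evf θ (r + 1) ω ∂(P l) := by
        refine tsum_congr fun m => ?_
        rw [Summable.tsum_finsetSum (fun l _ => ENNReal.summable)]
        exact Finset.sum_congr rfl fun l _ => ENNReal.tsum_mul_left
    _ = ∑ l : J, ∑' (m : ℕ),
          (∫⁻ ω in Ak k m ∩ Jset m l, evf θ m ω ∂(P i))
            * ∑' (r : ℕ), ∫⁻ ω in Ak 1 (r + 1) ∩ Jset (r + 1) j, evf θ (r + 1) ω ∂(P l) :=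
        Summable.tsum_finsetSum (fun l _ => ENNReal.summable)
    _ = ∑ l : J, Gmat P θ i k l * Gmat P θ l 1 j := by
        refine Finset.sum_congr rfl fun l _ => ?_
        rw [ENNReal.tsum_mul_right, Gmat_one_shift P θ l j]
        rfl

end Ladder

end WithHyp

end MarkovCore


open MeasureTheory in
/-- Markov renewal identity for ladder variates (equation (2.1)):
`E_γ[exp(θ T_{β(k)}); J_{β(k)} = j, β(k) < ∞] = (γ L_θᵏ)_j`, and consequently
`E_γ[exp(θ T_{β(k)}); β(k) < ∞] = γ L_θᵏ 1ᵗ`. -/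
theorem stmt_8
    {J : Type*} [Fintype J] [DecidableEq J] [Nonempty J]
    [MeasurableSpace J] [MeasurableSingletonClass J]
    (p : J → J → ℝ≥0∞) (hp : ∀ i, ∑ j, p i j = 1)
    (μ : J → J → Measure ℝ) (hμ : ∀ i j, IsProbabilityMeasure (μ i j))
    (P : J → Measure (ℕ → J × ℝ)) (hPprob : ∀ i, IsProbabilityMeasure (P i))
    -- the chain starts at `(i, 0)`
    (hinit : ∀ i, P i {ω | ω 0 = (i, 0)} = 1)
    -- Markov property: conditionally on `J_n = j`, the next pair `(J_{n+1} , Y_{n+1})`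
    -- has law `Σ_k p_{j,k} (δ_k ⊗ μ_{j,k})`, independently of the past
    (hstep : ∀ i : J, ∀ n : ℕ, ∀ C : Set (ℕ → J × ℝ),
      MeasurableSet C →
      (∀ ω ω' : ℕ → J × ℝ, (∀ m ≤ n, ω m = ω' m) → (ω ∈ C ↔ ω' ∈ C)) →
      ∀ k : J, ∀ B : Set ℝ, MeasurableSet B →
        P i (C ∩ {ω | (ω (n + 1)).1 = k ∧ (ω (n + 1)).2 ∈ B})
          = ∑ j, p j k * μ j k B * P i (C ∩ {ω | (ω n).1 = j}))
    (θ : ℝ)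
    -- the ladder matrix `L_θ`
    (Lθ : Matrix J J ℝ≥0∞)
    (hL : ∀ i j, Lθ i j = ∑' n : ℕ,
      ∫⁻ ω in {ω | ladder ω 1 = (n : ℕ∞) ∧ (ω n).1 = j},
        ENNReal.ofReal (Real.exp (θ * Tsum ω n)) ∂(P i)) :
    ∀ k : ℕ, 1 ≤ k → ∀ γ : J → ℝ≥0∞, (∑ i, γ i = 1) →
      (∀ j : J,
        (∑' n : ℕ, ∫⁻ ω in {ω | ladder ω k = (n : ℕ∞) ∧ (ω n).1 = j},
            ENNReal.ofReal (Real.exp (θ * Tsum ω n)) ∂(∑ i, γ i • P i))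
          = Matrix.vecMul γ (Lθ ^ k) j) ∧
      (∑' n : ℕ, ∫⁻ ω in {ω | ladder ω k = (n : ℕ∞)},
          ENNReal.ofReal (Real.exp (θ * Tsum ω n)) ∂(∑ i, γ i • P i))
        = dotProduct γ ((Lθ ^ k).mulVec fun _ => 1) := by
  intro k hk γ hγ
  have hG1 : ∀ l j : J, Gmat P θ l 1 j = Lθ l j := by
    intro l j
    rw [hL l j]
    unfold Gmat
    refine tsum_congr fun n => ?_
    have hs : {ω : ℕ → J × ℝ | ladder ω 1 = (n : ℕ∞) ∧ (ω n).1 = j}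
        = Ak 1 n ∩ Jset n j := rfl
    rw [hs]
    rfl
  have hGk : ∀ n : ℕ, ∀ i j : J, Gmat P θ i (n + 1) j = (Lθ ^ (n + 1)) i j := by
    intro n
    induction n with
    | zero =>
      intro i j
      rw [pow_one]
      exact hG1 i j
    | succ n ih =>
      intro i j
      rw [G_rec p μ P hPprob hinit hstep θ i j (n + 1), pow_succ, Matrix.mul_apply]
      exact Finset.sum_congr rfl fun l _ => by rw [ih i l, hG1 l j]
  have hsum : ∀ (E : ℕ → Set (ℕ → J × ℝ)), (∀ n, MeasurableSet (E n)) →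
      (∑' n, ∫⁻ ω in E n, evf θ n ω ∂(∑ i, γ i • P i))
        = ∑ i, γ i * ∑' n, ∫⁻ ω in E n, evf θ n ω ∂(P i) := by
    intro E hE
    calc ∑' n, ∫⁻ ω in E n, evf θ n ω ∂(∑ i, γ i • P i)
        = ∑' n, ∑ i, γ i * ∫⁻ ω in E n, evf θ n ω ∂(P i) := by
          refine tsum_congr fun n => ?_
          rw [← MeasureTheory.lintegral_indicator (hE n) (evf θ n),
            MeasureTheory.lintegral_finset_sum_measure]
          refine Finset.sum_congr rfl fun i _ => ?_
          rw [MeasureTheory.lintegral_smul_measure, smul_eq_mul,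
            MeasureTheory.lintegral_indicator (hE n) (evf θ n)]
      _ = ∑ i, γ i * ∑' n, ∫⁻ ω in E n, evf θ n ω ∂(P i) := by
          rw [Summable.tsum_finsetSum (fun i _ => ENNReal.summable)]
          exact Finset.sum_congr rfl fun i _ => ENNReal.tsum_mul_left
  obtain ⟨k', rfl⟩ : ∃ k', k = k' + 1 := ⟨k - 1, by omega⟩
  constructor
  · intro j
    have hgoal : (∑' n : ℕ, ∫⁻ ω in {ω : ℕ → J × ℝ | ladder ω (k' + 1) = (n : ℕ∞)
          ∧ (ω n).1 = j}, ENNReal.ofReal (Real.exp (θ * Tsum ω n)) ∂(∑ i, γ i • P i))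
        = ∑' n, ∫⁻ ω in Ak (k' + 1) n ∩ Jset n j, evf θ n ω ∂(∑ i, γ i • P i) := rfl
    rw [hgoal,
      hsum (fun n => Ak (k' + 1) n ∩ Jset n j)
        (fun n => (measurableSet_Ak (k' + 1) n).inter (measurableSet_Jset n j))]
    have hv : Matrix.vecMul γ (Lθ ^ (k' + 1)) j = ∑ i, γ i * (Lθ ^ (k' + 1)) i j := by
      simp [Matrix.vecMul, dotProduct]
    rw [hv]
    refine Finset.sum_congr rfl fun i _ => ?_
    congr 1
    exact hGk k' i j
  · have hgoal : (∑' n : ℕ, ∫⁻ ω in {ω : ℕ → J × ℝ | ladder ω (k' + 1) = (n : ℕ∞)},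
          ENNReal.ofReal (Real.exp (θ * Tsum ω n)) ∂(∑ i, γ i • P i))
        = ∑' n, ∫⁻ ω in Ak (k' + 1) n, evf θ n ω ∂(∑ i, γ i • P i) := rfl
    rw [hgoal, hsum (fun n => Ak (k' + 1) n) (fun n => measurableSet_Ak (k' + 1) n)]
    have hv : dotProduct γ ((Lθ ^ (k' + 1)).mulVec fun _ => 1)
        = ∑ i, γ i * ∑ j, (Lθ ^ (k' + 1)) i j := by
      simp [dotProduct, Matrix.mulVec, mul_one]
    rw [hv]
    refine Finset.sum_congr rfl fun i _ => ?_
    congr 1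
    calc ∑' n, ∫⁻ ω in Ak (k' + 1) n, evf θ n ω ∂(P i)
        = ∑' n, ∑ j, ∫⁻ ω in Ak (k' + 1) n ∩ Jset n j, evf θ n ω ∂(P i) :=
          tsum_congr fun n =>
            lintegral_partition P i _ (measurableSet_Ak (k' + 1) n) n (evf θ n)
      _ = ∑ j, Gmat P θ i (k' + 1) j := Summable.tsum_finsetSum (fun j _ => ENNReal.summable)
      _ = ∑ j, (Lθ ^ (k' + 1)) i j := Finset.sum_congr rfl fun j _ => hGk k' i j
end

section
/- (Fiber decomposition, equation (2.7).) Fix an integer N ≥ 1 and prefixes a ∈ 𝔏^N, b ∈ 𝔏^N. For i, j with min(i,j) ≤ N ≤ max(i,j) (or i = j = N) and T ∈ {S,I,D}, let E^T_{i,j} ⊆ 𝔈^ℕ be the event that some finite prefix of the infinite edit word consumes exactly i A-letters and j B-letters, has last symbol of type T, and its consumed A-letters agree with a in the first min(i,N) positions and its consumed B-letters agree with b in the first min(j,N) positions; set Q^T_{i,j} := Q(E^T_{i,j}). Assume that Q-almost surely both consumption counts of the infinite edit word tend to infinity. Then Q{ω : the sequence of consumed A-letters of ω begins with a and the sequence of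 consumed B-letters of ω begins with b} = − Q^S_{N,N} + Σ_{j=N}^{∞} ( Q^S_{N,j} + Q^D_{N,j} ) + Σ_{i=N}^{∞} ( Q^S_{i,N} + Q^I_{i,N} ). -/
open MeasureTheory ENNReal

/-- The three types of edit symbols: substitution, insertion, deletion. -/
inductive EType : Type
  | S : EType
  | I : EType
  | D : EType

/-- An edit symbol over an alphabet `L`: a substitution `(a,b)`, an insertion
`(Δ,b)`, or a deletion `(a,Δ)`. -/
inductive ESym (L : Type*) : Type _
  | sub (a b : L) : ESym L
  | ins (b : L) : ESym L
  | del (a : L) : ESym L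

instance {L : Type*} : MeasurableSpace (ESym L) := ⊤

/-- The type of an edit symbol. -/
def ESym.etype {L : Type*} : ESym L → EType
  | .sub _ _ => .S
  | .ins _ => .I
  | .del _ => .D

/-- The emission weight of an edit symbol. -/
def emit {L : Type*} (q : L → L → ℝ) (p' p : L → ℝ) : ESym L → ℝ
  | .sub a b => q a b
  | .ins b => p' b
  | .del a => p a

/-- The weight of an edit word, given the type of the preceding symbol
(`S` by convention for the first symbol). -/
def wordWeight {L : Type*} (t : EType → EType → ℝ) (q : L → L → ℝ) (p' p : L → ℝ) :
    EType → List (ESym L) → ℝ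
  | _, [] => 1
  | prev, e :: rest => t prev e.etype * emit q p' p e * wordWeight t q p' p e.etype rest

/-- The `A`-letters consumed by an edit word, in order. -/
def consumedA {L : Type*} : List (ESym L) → List L
  | [] => []
  | .sub a _ :: rest => a :: consumedA rest
  | .ins _ :: rest => consumedA rest
  | .del a :: rest => a :: consumedA rest

/-- The `B`-letters consumed by an edit word, in order. -/
def consumedB {L : Type*} : List (ESym L) → List L
  | [] => []
  | .sub _ b :: rest => b :: consumedB rest
  | .ins b :: rest => b :: consumedB rest
  | .del _ :: rest => consumedB rest

/-- The type of the last symbol of an edit word (`S` for the empty word, by convention). -/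
def lastType {L : Type*} : List (ESym L) → EType
  | [] => .S
  | [e] => e.etype
  | _ :: rest => lastType rest

/-- The prefix of length `n` of an infinite edit word. -/
def pref {L : Type*} (ω : ℕ → ESym L) (n : ℕ) : List (ESym L) :=
  List.ofFn fun m : Fin n => ω m

namespace Stmt12Aux

variable {L : Type*}

/-- Number of A-letters a symbol consumes. -/
def dA : ESym L → ℕ
  | .sub _ _ => 1
  | .ins _ => 0
  | .del _ => 1

/-- Number of B-letters a symbol consumes. -/
def dB : ESym L → ℕ
  | .sub _ _ => 1
  | .ins _ => 1
  | .del _ => 0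

lemma dA_le_one (e : ESym L) : dA e ≤ 1 := by cases e <;> simp [dA]
lemma dB_le_one (e : ESym L) : dB e ≤ 1 := by cases e <;> simp [dB]

lemma dA_of_SD {e : ESym L} (h : e.etype = .S ∨ e.etype = .D) : dA e = 1 := by
  cases e <;> simp_all [ESym.etype, dA]
lemma dB_of_SI {e : ESym L} (h : e.etype = .S ∨ e.etype = .I) : dB e = 1 := by
  cases e <;> simp_all [ESym.etype, dB]
lemma SD_of_dA {e : ESym L} (h : dA e = 1) : e.etype = .S ∨ e.etype = .D := by
  cases e <;> simp_all [ESym.etype, dA]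
lemma SI_of_dB {e : ESym L} (h : dB e = 1) : e.etype = .S ∨ e.etype = .I := by
  cases e <;> simp_all [ESym.etype, dB]

lemma consumedA_append (l₁ l₂ : List (ESym L)) :
    consumedA (l₁ ++ l₂) = consumedA l₁ ++ consumedA l₂ := by
  induction l₁ with
  | nil => rfl
  | cons e l ih => cases e <;> simp [consumedA, ih]

lemma consumedB_append (l₁ l₂ : List (ESym L)) :
    consumedB (l₁ ++ l₂) = consumedB l₁ ++ consumedB l₂ := by
  induction l₁ with
  | nil => rfl
  | cons e l ih => cases e <;> simp [consumedB, ih]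

lemma length_consumedA_concat (l : List (ESym L)) (e : ESym L) :
    (consumedA (l ++ [e])).length = (consumedA l).length + dA e := by
  rw [consumedA_append]; cases e <;> simp [consumedA, dA]

lemma length_consumedB_concat (l : List (ESym L)) (e : ESym L) :
    (consumedB (l ++ [e])).length = (consumedB l).length + dB e := by
  rw [consumedB_append]; cases e <;> simp [consumedB, dB]

lemma lastType_concat (l : List (ESym L)) (e : ESym L) :
    lastType (l ++ [e]) = e.etype := by
  induction l with
  | nil => rfl
  | cons x l ih =>
    cases l with
    | nil => rfl
    | cons y l' => exact ih

lemma pref_zero (ω : ℕ → ESym L) : pref ω 0 = [] := rfl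

lemma pref_succ (ω : ℕ → ESym L) (n : ℕ) : pref ω (n + 1) = pref ω n ++ [ω n] := by
  rw [pref, List.ofFn_succ', List.concat_eq_append]
  simp [pref]

lemma pref_prefix (ω : ℕ → ESym L) {m n : ℕ} (h : m ≤ n) : pref ω m <+: pref ω n := by
  induction n, h using Nat.le_induction with
  | base => exact List.prefix_refl _
  | succ n hmn ih => rw [pref_succ]; exact ih.trans (List.prefix_append _ _)

lemma consumedA_mono {l₁ l₂ : List (ESym L)} (h : l₁ <+: l₂) :
    consumedA l₁ <+: consumedA l₂ := by
  obtain ⟨t, rfl⟩ := h; rw [consumedA_append]; exact List.prefix_append _ _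

lemma consumedB_mono {l₁ l₂ : List (ESym L)} (h : l₁ <+: l₂) :
    consumedB l₁ <+: consumedB l₂ := by
  obtain ⟨t, rfl⟩ := h; rw [consumedB_append]; exact List.prefix_append _ _

lemma take_eq_of_prefix {α : Type*} {l₁ l₂ : List α} (h : l₁ <+: l₂) {N : ℕ}
    (hN : N ≤ l₁.length) : l₂.take N = l₁.take N := by
  obtain ⟨t, rfl⟩ := h
  exact List.take_append_of_le_length hN

/-- A-consumption count of the length-`n` prefix. -/
def lenA (ω : ℕ → ESym L) (n : ℕ) : ℕ := (consumedA (pref ω n)).length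

/-- B-consumption count of the length-`n` prefix. -/
def lenB (ω : ℕ → ESym L) (n : ℕ) : ℕ := (consumedB (pref ω n)).length

lemma lenA_zero (ω : ℕ → ESym L) : lenA ω 0 = 0 := rfl
lemma lenB_zero (ω : ℕ → ESym L) : lenB ω 0 = 0 := rfl

lemma lenA_succ (ω : ℕ → ESym L) (n : ℕ) : lenA ω (n + 1) = lenA ω n + dA (ω n) := by
  rw [lenA, pref_succ, length_consumedA_concat]; rfl

lemma lenB_succ (ω : ℕ → ESym L) (n : ℕ) : lenB ω (n + 1) = lenB ω n + dB (ω n) := by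
  rw [lenB, pref_succ, length_consumedB_concat]; rfl

lemma lenA_mono (ω : ℕ → ESym L) {m n : ℕ} (h : m ≤ n) : lenA ω m ≤ lenA ω n :=
  (consumedA_mono (pref_prefix ω h)).length_le

lemma lenB_mono (ω : ℕ → ESym L) {m n : ℕ} (h : m ≤ n) : lenB ω m ≤ lenB ω n :=
  (consumedB_mono (pref_prefix ω h)).length_le

/-- Properties of an "A-row witness": a prefix of A-length `N` whose last symbol
consumes an A-letter. -/
lemma witnessA {ω : ℕ → ESym L} {N n : ℕ} (hN : 1 ≤ N)
    (hn : lenA ω n = N) (hT : lastType (pref ω n) = .S ∨ lastType (pref ω n) = .D) :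
    1 ≤ n ∧ lenA ω (n - 1) + 1 = N ∧ (ω (n - 1)).etype = lastType (pref ω n) := by
  have h0 : n ≠ 0 := by rintro rfl; rw [lenA_zero] at hn; omega
  have h1 : 1 ≤ n := Nat.one_le_iff_ne_zero.mpr h0
  have hps : pref ω n = pref ω (n - 1) ++ [ω (n - 1)] := by
    conv_lhs => rw [show n = (n - 1) + 1 by omega]
    exact pref_succ ω (n - 1)
  have hlt : (ω (n - 1)).etype = lastType (pref ω n) := by
    rw [hps, lastType_concat]
  have hd : dA (ω (n - 1)) = 1 := dA_of_SD (by rw [hlt]; exact hT)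
  have hs : lenA ω n = lenA ω (n - 1) + dA (ω (n - 1)) := by
    conv_lhs => rw [show n = (n - 1) + 1 by omega]
    exact lenA_succ ω (n - 1)
  exact ⟨h1, by omega, hlt⟩

lemma witnessB {ω : ℕ → ESym L} {N n : ℕ} (hN : 1 ≤ N)
    (hn : lenB ω n = N) (hT : lastType (pref ω n) = .S ∨ lastType (pref ω n) = .I) :
    1 ≤ n ∧ lenB ω (n - 1) + 1 = N ∧ (ω (n - 1)).etype = lastType (pref ω n) := by
  have h0 : n ≠ 0 := by rintro rfl; rw [lenB_zero] at hn; omega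
  have h1 : 1 ≤ n := Nat.one_le_iff_ne_zero.mpr h0
  have hps : pref ω n = pref ω (n - 1) ++ [ω (n - 1)] := by
    conv_lhs => rw [show n = (n - 1) + 1 by omega]
    exact pref_succ ω (n - 1)
  have hlt : (ω (n - 1)).etype = lastType (pref ω n) := by
    rw [hps, lastType_concat]
  have hd : dB (ω (n - 1)) = 1 := dB_of_SI (by rw [hlt]; exact hT)
  have hs : lenB ω n = lenB ω (n - 1) + dB (ω (n - 1)) := by
    conv_lhs => rw [show n = (n - 1) + 1 by omega]
    exact lenB_succ ω (n - 1)
  exact ⟨h1, by omega, hlt⟩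

/-- Two A-row witnesses coincide. -/
lemma crossA_unique {ω : ℕ → ESym L} {N n m : ℕ} (hN : 1 ≤ N)
    (hn : lenA ω n = N) (hTn : lastType (pref ω n) = .S ∨ lastType (pref ω n) = .D)
    (hm : lenA ω m = N) (hTm : lastType (pref ω m) = .S ∨ lastType (pref ω m) = .D) :
    n = m := by
  obtain ⟨h1n, h2n, -⟩ := witnessA hN hn hTn
  obtain ⟨h1m, h2m, -⟩ := witnessA hN hm hTm
  by_contra hne
  rcases Nat.lt_or_ge n m with h | h
  · have : lenA ω n ≤ lenA ω (m - 1) := lenA_mono ω (by omega)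
    omega
  · have hlt : m < n := by omega
    have : lenA ω m ≤ lenA ω (n - 1) := lenA_mono ω (by omega)
    omega

/-- Two B-column witnesses coincide. -/
lemma crossB_unique {ω : ℕ → ESym L} {N n m : ℕ} (hN : 1 ≤ N)
    (hn : lenB ω n = N) (hTn : lastType (pref ω n) = .S ∨ lastType (pref ω n) = .I)
    (hm : lenB ω m = N) (hTm : lastType (pref ω m) = .S ∨ lastType (pref ω m) = .I) :
    n = m := by
  obtain ⟨h1n, h2n, -⟩ := witnessB hN hn hTn
  obtain ⟨h1m, h2m, -⟩ := witnessB hN hm hTm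
  by_contra hne
  rcases Nat.lt_or_ge n m with h | h
  · have : lenB ω n ≤ lenB ω (m - 1) := lenB_mono ω (by omega)
    omega
  · have : lenB ω m ≤ lenB ω (n - 1) := lenB_mono ω (by omega)
    omega

/-- A row witness and a column witness must be at the same time. -/
lemma row_col_eq {ω : ℕ → ESym L} {N n m : ℕ} (hN : 1 ≤ N)
    (hnA : lenA ω n = N) (hTn : lastType (pref ω n) = .S ∨ lastType (pref ω n) = .D)
    (hmB : lenB ω m = N) (hTm : lastType (pref ω m) = .S ∨ lastType (pref ω m) = .I)
    (hmA : N ≤ lenA ω m) (hnB : N ≤ lenB ω n) : n = m := by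
  obtain ⟨h1n, h2n, -⟩ := witnessA hN hnA hTn
  obtain ⟨h1m, h2m, -⟩ := witnessB hN hmB hTm
  by_contra hne
  rcases Nat.lt_or_ge n m with h | h
  · have : lenB ω n ≤ lenB ω (m - 1) := lenB_mono ω (by omega)
    omega
  · have hlt : m < n := by omega
    have : lenA ω m ≤ lenA ω (n - 1) := lenA_mono ω (by omega)
    omega

/-- First crossing of level `N` by the A-count. -/
lemma least_crossA {ω : ℕ → ESym L} {N : ℕ} (hN : 1 ≤ N) (hex : ∃ k, N ≤ lenA ω k) :
    lenA ω (Nat.find hex) = N ∧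
    (lastType (pref ω (Nat.find hex)) = .S ∨ lastType (pref ω (Nat.find hex)) = .D) := by
  set n := Nat.find hex with hn
  have h1 : N ≤ lenA ω n := Nat.find_spec hex
  have h0 : n ≠ 0 := by rintro h; rw [h, lenA_zero] at h1; omega
  have h2 : ¬ N ≤ lenA ω (n - 1) := Nat.find_min hex (by omega)
  have hs : lenA ω n = lenA ω (n - 1) + dA (ω (n - 1)) := by
    conv_lhs => rw [show n = (n - 1) + 1 by omega]
    exact lenA_succ ω (n - 1)
  have hd1 : dA (ω (n - 1)) ≤ 1 := dA_le_one _
  have hlen : lenA ω n = N := by omega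
  have hd : dA (ω (n - 1)) = 1 := by omega
  have hps : pref ω n = pref ω (n - 1) ++ [ω (n - 1)] := by
    conv_lhs => rw [show n = (n - 1) + 1 by omega]
    exact pref_succ ω (n - 1)
  refine ⟨hlen, ?_⟩
  rw [hps, lastType_concat]
  exact SD_of_dA hd

lemma least_crossB {ω : ℕ → ESym L} {N : ℕ} (hN : 1 ≤ N) (hex : ∃ k, N ≤ lenB ω k) :
    lenB ω (Nat.find hex) = N ∧
    (lastType (pref ω (Nat.find hex)) = .S ∨ lastType (pref ω (Nat.find hex)) = .I) := by
  set n := Nat.find hex with hn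
  have h1 : N ≤ lenB ω n := Nat.find_spec hex
  have h0 : n ≠ 0 := by rintro h; rw [h, lenB_zero] at h1; omega
  have h2 : ¬ N ≤ lenB ω (n - 1) := Nat.find_min hex (by omega)
  have hs : lenB ω n = lenB ω (n - 1) + dB (ω (n - 1)) := by
    conv_lhs => rw [show n = (n - 1) + 1 by omega]
    exact lenB_succ ω (n - 1)
  have hd1 : dB (ω (n - 1)) ≤ 1 := dB_le_one _
  have hlen : lenB ω n = N := by omega
  have hd : dB (ω (n - 1)) = 1 := by omega
  have hps : pref ω n = pref ω (n - 1) ++ [ω (n - 1)] := by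
    conv_lhs => rw [show n = (n - 1) + 1 by omega]
    exact pref_succ ω (n - 1)
  refine ⟨hlen, ?_⟩
  rw [hps, lastType_concat]
  exact SI_of_dB hd

/-- Injective encoding of edit symbols, for countability. -/
def encode : ESym L → (L × L) ⊕ L ⊕ L
  | .sub a b => .inl (a, b)
  | .ins b => .inr (.inl b)
  | .del a => .inr (.inr a)

lemma encode_injective : Function.Injective (encode (L := L)) := by
  rintro ⟨⟩ ⟨⟩ h <;> simp_all [encode]

instance [Countable L] : Countable (ESym L) := encode_injective.countable

lemma measurableSet_cyl [Countable L] (n : ℕ) (e : List (ESym L)) :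
    MeasurableSet {ω : ℕ → ESym L | pref ω n = e} := by
  by_cases h : e.length = n
  · subst h
    have : {ω : ℕ → ESym L | pref ω e.length = e} =
        ⋂ m : Fin e.length, {ω : ℕ → ESym L | ω m = e.get m} := by
      ext ω
      simp only [Set.mem_setOf_eq, Set.mem_iInter]
      constructor
      · intro h m
        have h2 := congrArg (fun l => l[(m : ℕ)]?) h
        simpa [pref, List.getElem?_ofFn, List.getElem?_eq_getElem, m.isLt,
          List.get_eq_getElem] using h2
      · intro h
        conv_rhs => rw [← List.ofFn_get e]
        rw [pref]
        congr 1
        ext m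
        exact h m
    rw [this]
    refine MeasurableSet.iInter fun m => ?_
    have h3 : {ω : ℕ → ESym L | ω m = e.get m} =
        (fun ω : ℕ → ESym L => ω (m : ℕ)) ⁻¹' {e.get m} := rfl
    rw [h3]
    exact measurable_pi_apply (m : ℕ) MeasurableSpace.measurableSet_top
  · have : {ω : ℕ → ESym L | pref ω n = e} = ∅ := by
      ext ω
      simp only [Set.mem_setOf_eq, Set.mem_empty_iff_false, iff_false]
      intro hc
      apply h
      rw [← hc, pref, List.length_ofFn]
    rw [this]
    exact MeasurableSet.empty

lemma measurableSet_pref [Countable L] (P : ℕ → List (ESym L) → Prop) :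
    MeasurableSet {ω : ℕ → ESym L | ∃ n, P n (pref ω n)} := by
  have : {ω : ℕ → ESym L | ∃ n, P n (pref ω n)} =
      ⋃ n, ⋃ e : {e : List (ESym L) // P n e}, {ω : ℕ → ESym L | pref ω n = e} := by
    ext ω
    simp only [Set.mem_setOf_eq, Set.mem_iUnion]
    constructor
    · rintro ⟨n, h⟩; exact ⟨n, ⟨pref ω n, h⟩, rfl⟩
    · rintro ⟨n, ⟨e, he⟩, h⟩; exact ⟨n, by rw [h]; exact he⟩
  rw [this]
  exact MeasurableSet.iUnion fun n => MeasurableSet.iUnion fun e => measurableSet_cyl n e.val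

end Stmt12Aux

open Stmt12Aux

/-- Fiber decomposition (equation (2.7)): decomposing the cylinder event that the
consumed `A`- and `B`-letters begin with the prefixes `a[1,N]`, `b[1,N]` according to
where the alignment path hits the rays `I_{N,N} ∪ D_{N,N}` and the type of its last
transition. Stated additively in `[0,∞]`: `Q(G) + Q^S_{N,N} = Σ_{j≥N}(Q^S_{N,j}+Q^D_{N,j})
+ Σ_{i≥N}(Q^S_{i,N}+Q^I_{i,N})`. -/
theorem stmt_12 {L : Type*} [Fintype L]
    (t : EType → EType → ℝ) (ht0 : ∀ T T', 0 ≤ t T T')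
    (ht1 : ∀ T, t T .S + t T .I + t T .D = 1)
    (q : L → L → ℝ) (hq0 : ∀ a b, 0 ≤ q a b) (hq1 : ∑ a, ∑ b, q a b = 1)
    (p' : L → ℝ) (hp'0 : ∀ b, 0 ≤ p' b) (hp'1 : ∑ b, p' b = 1)
    (p : L → ℝ) (hp0 : ∀ a, 0 ≤ p a) (hp1 : ∑ a, p a = 1)
    (Q : Measure (ℕ → ESym L)) (hQprob : IsProbabilityMeasure Q)
    -- cylinder probabilities of the Markov chain of edit symbols started from `S`
    (hQ : ∀ e : List (ESym L),
      Q {ω | pref ω e.length = e} = ENNReal.ofReal (wordWeight t q p' p EType.S e))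
    (N : ℕ) (hN : 1 ≤ N) (a b : ℕ → L)
    -- the events `E^T_{i,j}` and their probabilities `Q^T_{i,j}`
    (QT : EType → ℕ → ℕ → ℝ≥0∞)
    (hQT : ∀ T i j, QT T i j = Q {ω | ∃ n : ℕ,
      (consumedA (pref ω n)).length = i ∧
      (consumedB (pref ω n)).length = j ∧
      lastType (pref ω n) = T ∧
      (consumedA (pref ω n)).take (min i N) = (List.range (min i N)).map (fun m => a (m + 1)) ∧
      (consumedB (pref ω n)).take (min j N) = (List.range (min j N)).map (fun m => b (m + 1))})
    -- almost surely, both consumption counts tend to infinity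
    (has : ∀ᵐ ω ∂Q,
      Filter.Tendsto (fun n => (consumedA (pref ω n)).length) Filter.atTop Filter.atTop ∧
      Filter.Tendsto (fun n => (consumedB (pref ω n)).length) Filter.atTop Filter.atTop) :
    Q {ω | ∃ n : ℕ, N ≤ (consumedA (pref ω n)).length ∧ N ≤ (consumedB (pref ω n)).length ∧
        (consumedA (pref ω n)).take N = (List.range N).map (fun m => a (m + 1)) ∧
        (consumedB (pref ω n)).take N = (List.range N).map (fun m => b (m + 1))}
      + QT .S N N
      = (∑' j : ℕ, (QT .S N (N + j) + QT .D N (N + j)))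
        + (∑' i : ℕ, (QT .S (N + i) N + QT .I (N + i) N)) := by
  classical
  set E : EType → ℕ → ℕ → Set (ℕ → ESym L) := fun T i j => {ω | ∃ n : ℕ,
      (consumedA (pref ω n)).length = i ∧
      (consumedB (pref ω n)).length = j ∧
      lastType (pref ω n) = T ∧
      (consumedA (pref ω n)).take (min i N) = (List.range (min i N)).map (fun m => a (m + 1)) ∧
      (consumedB (pref ω n)).take (min j N) = (List.range (min j N)).map (fun m => b (m + 1))}
    with hEdef
  have hQTE : ∀ T i j, QT T i j = Q (E T i j) := hQT
  have hmeasE : ∀ T i j, MeasurableSet (E T i j) := by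
    intro T i j
    exact measurableSet_pref (fun _ l =>
      (consumedA l).length = i ∧ (consumedB l).length = j ∧ lastType l = T ∧
      (consumedA l).take (min i N) = (List.range (min i N)).map (fun m => a (m + 1)) ∧
      (consumedB l).take (min j N) = (List.range (min j N)).map (fun m => b (m + 1)))
  set F1 : ℕ → Set (ℕ → ESym L) := fun j => E .S N (N + j) ∪ E .D N (N + j) with hF1def
  set F2 : ℕ → Set (ℕ → ESym L) := fun i => E .S (N + i) N ∪ E .I (N + i) N with hF2def
  -- witness extraction
  have hF1w : ∀ j ω, ω ∈ F1 j → ∃ n,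
      (consumedA (pref ω n)).length = N ∧ (consumedB (pref ω n)).length = N + j ∧
      (lastType (pref ω n) = .S ∨ lastType (pref ω n) = .D) ∧
      (consumedA (pref ω n)).take (min N N) = (List.range (min N N)).map (fun m => a (m + 1)) ∧
      (consumedB (pref ω n)).take (min (N + j) N)
        = (List.range (min (N + j) N)).map (fun m => b (m + 1)) := by
    rintro j ω (⟨n, h1, h2, h3, h4, h5⟩ | ⟨n, h1, h2, h3, h4, h5⟩)
    · exact ⟨n, h1, h2, Or.inl h3, h4, h5⟩
    · exact ⟨n, h1, h2, Or.inr h3, h4, h5⟩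
  have hF2w : ∀ i ω, ω ∈ F2 i → ∃ n,
      (consumedA (pref ω n)).length = N + i ∧ (consumedB (pref ω n)).length = N ∧
      (lastType (pref ω n) = .S ∨ lastType (pref ω n) = .I) ∧
      (consumedA (pref ω n)).take (min (N + i) N)
        = (List.range (min (N + i) N)).map (fun m => a (m + 1)) ∧
      (consumedB (pref ω n)).take (min N N) = (List.range (min N N)).map (fun m => b (m + 1)) := by
    rintro i ω (⟨n, h1, h2, h3, h4, h5⟩ | ⟨n, h1, h2, h3, h4, h5⟩)
    · exact ⟨n, h1, h2, Or.inl h3, h4, h5⟩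
    · exact ⟨n, h1, h2, Or.inr h3, h4, h5⟩
  -- pairwise disjointness of the rows/columns
  have hdisj1 : Pairwise (Function.onFun Disjoint F1) := by
    intro j j' hjj'
    rw [Function.onFun, Set.disjoint_left]
    intro ω h h'
    obtain ⟨n, h1, h2, h3, -, -⟩ := hF1w j ω h
    obtain ⟨n', h1', h2', h3', -, -⟩ := hF1w j' ω h'
    have hnn : n = n' := crossA_unique hN h1 h3 h1' h3'
    rw [hnn, h2'] at h2
    exact hjj' (by omega)
  have hdisj2 : Pairwise (Function.onFun Disjoint F2) := by
    intro i i' hii'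
    rw [Function.onFun, Set.disjoint_left]
    intro ω h h'
    obtain ⟨n, h1, h2, h3, -, -⟩ := hF2w i ω h
    obtain ⟨n', h1', h2', h3', -, -⟩ := hF2w i' ω h'
    have hnn : n = n' := crossB_unique hN h2 h3 h2' h3'
    rw [hnn, h1'] at h1
    exact hii' (by omega)
  have hdisjSD : ∀ j, Disjoint (E .S N (N + j)) (E .D N (N + j)) := by
    intro j
    rw [Set.disjoint_left]
    intro ω h h'
    obtain ⟨n, h1, h2, h3, -, -⟩ := h
    obtain ⟨n', h1', h2', h3', -, -⟩ := h'
    have hnn : n = n' := crossA_unique hN h1 (Or.inl h3) h1' (Or.inr h3')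
    rw [hnn, h3'] at h3
    exact EType.noConfusion h3
  have hdisjSI : ∀ i, Disjoint (E .S (N + i) N) (E .I (N + i) N) := by
    intro i
    rw [Set.disjoint_left]
    intro ω h h'
    obtain ⟨n, h1, h2, h3, -, -⟩ := h
    obtain ⟨n', h1', h2', h3', -, -⟩ := h'
    have hnn : n = n' := crossB_unique hN h2 (Or.inl h3) h2' (Or.inr h3')
    rw [hnn, h3'] at h3
    exact EType.noConfusion h3
  -- the union of rows/columns is contained in the cylinder event
  have hsub1 : (⋃ j, F1 j) ⊆ {ω | ∃ n : ℕ,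
      N ≤ (consumedA (pref ω n)).length ∧ N ≤ (consumedB (pref ω n)).length ∧
      (consumedA (pref ω n)).take N = (List.range N).map (fun m => a (m + 1)) ∧
      (consumedB (pref ω n)).take N = (List.range N).map (fun m => b (m + 1))} := by
    intro ω hω
    obtain ⟨j, hj⟩ := Set.mem_iUnion.mp hω
    obtain ⟨n, h1, h2, -, h4, h5⟩ := hF1w j ω hj
    rw [Nat.min_self] at h4
    rw [Nat.min_eq_right (by omega)] at h5
    exact ⟨n, h1.ge, by omega, h4, h5⟩
  have hsub2 : (⋃ i, F2 i) ⊆ {ω | ∃ n : ℕ,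
      N ≤ (consumedA (pref ω n)).length ∧ N ≤ (consumedB (pref ω n)).length ∧
      (consumedA (pref ω n)).take N = (List.range N).map (fun m => a (m + 1)) ∧
      (consumedB (pref ω n)).take N = (List.range N).map (fun m => b (m + 1))} := by
    intro ω hω
    obtain ⟨i, hi⟩ := Set.mem_iUnion.mp hω
    obtain ⟨n, h1, h2, -, h4, h5⟩ := hF2w i ω hi
    rw [Nat.min_eq_right (by omega)] at h4
    rw [Nat.min_self] at h5
    exact ⟨n, by omega, h2.ge, h4, h5⟩
  -- and conversely
  have hGsub : {ω | ∃ n : ℕ,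
      N ≤ (consumedA (pref ω n)).length ∧ N ≤ (consumedB (pref ω n)).length ∧
      (consumedA (pref ω n)).take N = (List.range N).map (fun m => a (m + 1)) ∧
      (consumedB (pref ω n)).take N = (List.range N).map (fun m => b (m + 1))}
      ⊆ (⋃ j, F1 j) ∪ (⋃ i, F2 i) := by
    rintro ω ⟨n, hA, hB, hta, htb⟩
    have hexA : ∃ k, N ≤ lenA ω k := ⟨n, hA⟩
    have hexB : ∃ k, N ≤ lenB ω k := ⟨n, hB⟩
    obtain ⟨hA0, hT0⟩ := least_crossA hN hexA
    obtain ⟨hB0, hU0⟩ := least_crossB hN hexB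
    have hn₀n : Nat.find hexA ≤ n := Nat.find_min' hexA hA
    have hm₀n : Nat.find hexB ≤ n := Nat.find_min' hexB hB
    rcases le_total (Nat.find hexB) (Nat.find hexA) with hmn | hnm
    · left
      have hBge : N ≤ lenB ω (Nat.find hexA) := hB0.ge.trans (lenB_mono ω hmn)
      refine Set.mem_iUnion.mpr ⟨lenB ω (Nat.find hexA) - N, ?_⟩
      have hjj : N + (lenB ω (Nat.find hexA) - N) = lenB ω (Nat.find hexA) := by omega
      show ω ∈ E .S N (N + (lenB ω (Nat.find hexA) - N))
          ∪ E .D N (N + (lenB ω (Nat.find hexA) - N))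
      rw [hjj]
      have htakeA : (consumedA (pref ω (Nat.find hexA))).take (min N N)
          = (List.range (min N N)).map (fun m => a (m + 1)) := by
        rw [Nat.min_self]
        calc (consumedA (pref ω (Nat.find hexA))).take N
            = (consumedA (pref ω n)).take N :=
              (take_eq_of_prefix (consumedA_mono (pref_prefix ω hn₀n)) hA0.ge).symm
          _ = _ := hta
      have htakeB : (consumedB (pref ω (Nat.find hexA))).take (min (lenB ω (Nat.find hexA)) N)
          = (List.range (min (lenB ω (Nat.find hexA)) N)).map (fun m => b (m + 1)) := by
        rw [Nat.min_eq_right hBge]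
        calc (consumedB (pref ω (Nat.find hexA))).take N
            = (consumedB (pref ω n)).take N :=
              (take_eq_of_prefix (consumedB_mono (pref_prefix ω hn₀n)) hBge).symm
          _ = _ := htb
      rcases hT0 with hS | hD
      · exact Or.inl ⟨Nat.find hexA, hA0, rfl, hS, htakeA, htakeB⟩
      · exact Or.inr ⟨Nat.find hexA, hA0, rfl, hD, htakeA, htakeB⟩
    · right
      have hAge : N ≤ lenA ω (Nat.find hexB) := hA0.ge.trans (lenA_mono ω hnm)
      refine Set.mem_iUnion.mpr ⟨lenA ω (Nat.find hexB) - N, ?_⟩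
      have hii : N + (lenA ω (Nat.find hexB) - N) = lenA ω (Nat.find hexB) := by omega
      show ω ∈ E .S (N + (lenA ω (Nat.find hexB) - N)) N
          ∪ E .I (N + (lenA ω (Nat.find hexB) - N)) N
      rw [hii]
      have htakeA : (consumedA (pref ω (Nat.find hexB))).take (min (lenA ω (Nat.find hexB)) N)
          = (List.range (min (lenA ω (Nat.find hexB)) N)).map (fun m => a (m + 1)) := by
        rw [Nat.min_eq_right hAge]
        calc (consumedA (pref ω (Nat.find hexB))).take N
            = (consumedA (pref ω n)).take N :=
              (take_eq_of_prefix (consumedA_mono (pref_prefix ω hm₀n)) hAge).symm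
          _ = _ := hta
      have htakeB : (consumedB (pref ω (Nat.find hexB))).take (min N N)
          = (List.range (min N N)).map (fun m => b (m + 1)) := by
        rw [Nat.min_self]
        calc (consumedB (pref ω (Nat.find hexB))).take N
            = (consumedB (pref ω n)).take N :=
              (take_eq_of_prefix (consumedB_mono (pref_prefix ω hm₀n)) hB0.ge).symm
          _ = _ := htb
      rcases hU0 with hS | hI
      · exact Or.inl ⟨Nat.find hexB, rfl, hB0, hS, htakeA, htakeB⟩
      · exact Or.inr ⟨Nat.find hexB, rfl, hB0, hI, htakeA, htakeB⟩
  -- the intersection is the corner event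
  have hcap : (⋃ j, F1 j) ∩ (⋃ i, F2 i) = E .S N N := by
    apply Set.Subset.antisymm
    · rintro ω ⟨hu1, hu2⟩
      obtain ⟨j, hj⟩ := Set.mem_iUnion.mp hu1
      obtain ⟨i, hi⟩ := Set.mem_iUnion.mp hu2
      obtain ⟨n, hA, hBn, hT, hta, htb⟩ := hF1w j ω hj
      obtain ⟨m, hAm, hB, hU, hta', htb'⟩ := hF2w i ω hi
      have hAm' : N ≤ lenA ω m := by rw [show lenA ω m = N + i from hAm]; omega
      have hBn' : N ≤ lenB ω n := by rw [show lenB ω n = N + j from hBn]; omega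
      have hnm : n = m := row_col_eq hN hA hT hB hU hAm' hBn'
      have hj0 : j = 0 := by rw [hnm, hB] at hBn; omega
      have hlt : lastType (pref ω n) = .S := by
        rcases hT with hS | hD
        · exact hS
        · rcases hU with hS | hI
          · rw [← hnm] at hS; exact hS
          · rw [← hnm] at hI; rw [hI] at hD; exact EType.noConfusion hD
      rw [hj0, Nat.add_zero] at hBn htb
      exact ⟨n, hA, hBn, hlt, hta, htb⟩
    · intro ω hω
      constructor
      · refine Set.mem_iUnion.mpr ⟨0, ?_⟩
        show ω ∈ E .S N (N + 0) ∪ E .D N (N + 0)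
        rw [Nat.add_zero]
        exact Or.inl hω
      · refine Set.mem_iUnion.mpr ⟨0, ?_⟩
        show ω ∈ E .S (N + 0) N ∪ E .I (N + 0) N
        rw [Nat.add_zero]
        exact Or.inl hω
  -- measures of the unions
  have hmeasF1 : ∀ j, MeasurableSet (F1 j) := fun j => (hmeasE _ _ _).union (hmeasE _ _ _)
  have hmeasF2 : ∀ i, MeasurableSet (F2 i) := fun i => (hmeasE _ _ _).union (hmeasE _ _ _)
  have hQU1 : Q (⋃ j, F1 j) = ∑' j : ℕ, (QT .S N (N + j) + QT .D N (N + j)) := by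
    rw [measure_iUnion hdisj1 hmeasF1]
    refine tsum_congr fun j => ?_
    rw [show F1 j = E .S N (N + j) ∪ E .D N (N + j) from rfl,
      measure_union (hdisjSD j) (hmeasE _ _ _), hQTE, hQTE]
  have hQU2 : Q (⋃ i, F2 i) = ∑' i : ℕ, (QT .S (N + i) N + QT .I (N + i) N) := by
    rw [measure_iUnion hdisj2 hmeasF2]
    refine tsum_congr fun i => ?_
    rw [show F2 i = E .S (N + i) N ∪ E .I (N + i) N from rfl,
      measure_union (hdisjSI i) (hmeasE _ _ _), hQTE, hQTE]
  have hGeq : {ω | ∃ n : ℕ,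
      N ≤ (consumedA (pref ω n)).length ∧ N ≤ (consumedB (pref ω n)).length ∧
      (consumedA (pref ω n)).take N = (List.range N).map (fun m => a (m + 1)) ∧
      (consumedB (pref ω n)).take N = (List.range N).map (fun m => b (m + 1))}
      = (⋃ j, F1 j) ∪ (⋃ i, F2 i) :=
    Set.Subset.antisymm hGsub (Set.union_subset hsub1 hsub2)
  calc Q {ω | ∃ n : ℕ,
        N ≤ (consumedA (pref ω n)).length ∧ N ≤ (consumedB (pref ω n)).length ∧
        (consumedA (pref ω n)).take N = (List.range N).map (fun m => a (m + 1)) ∧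
        (consumedB (pref ω n)).take N = (List.range N).map (fun m => b (m + 1))}
        + QT .S N N
      = Q ((⋃ j, F1 j) ∪ (⋃ i, F2 i)) + Q ((⋃ j, F1 j) ∩ (⋃ i, F2 i)) := by
        rw [hGeq, hcap, hQTE]
    _ = Q (⋃ j, F1 j) + Q (⋃ i, F2 i) :=
        measure_union_add_inter _ (MeasurableSet.iUnion hmeasF2)
    _ = (∑' j : ℕ, (QT .S N (N + j) + QT .D N (N + j)))
        + (∑' i : ℕ, (QT .S (N + i) N + QT .I (N + i) N)) := by
        rw [hQU1, hQU2]
end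

section
/- For Δ₀, Δ₁ ≥ 0 and every (i,j) with i + j ≥ 1, the maximum weight over ALL directed paths from (0,0) to (i,j) in the alignment graph (with no restriction on consecutive edge directions) equals max{ S_{i,j}, I_{i,j}, D_{i,j} }; that is, restricting to alignment paths (no two consecutive north edges, no two consecutive east edges, and no east edge immediately following a north edge) does not change the optimal global score. (The proof uses that the affine gap penalty is subadditive, w_{g+h} ≤ w_g + w_h, since Δ₀ ≥ 0, and that a north edge followed by an east edge can be replaced by the east edge followed by the north edge with the same total weight.) -/
/-- A move (edge) in the alignment graph: a diagonal edge, a north edge of length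
`g + 1`, or an east edge of length `g + 1` (so that all gap lengths are `≥ 1`). -/
inductive Move : Type
  | diag : Move
  | north (g : ℕ) : Move
  | east (g : ℕ) : Move

/-- The endpoint of a path, given its starting vertex and its list of moves. -/
def endpt : ℕ × ℕ → List Move → ℕ × ℕ
  | pt, [] => pt
  | (i, j), Move.diag :: l => endpt (i + 1, j + 1) l
  | (i, j), Move.north g :: l => endpt (i, j + (g + 1)) l
  | (i, j), Move.east g :: l => endpt (i + (g + 1), j) l

/-- The weight of a path: diagonal edges into `(i,j)` score `s(A_i, B_j)`, while a
north or east edge of length `g` scores `−(Δ₀ + Δ₁ g)`. -/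
noncomputable def pweight {L : Type*} (A B : ℕ → L) (s : L → L → ℝ) (Δ₀ Δ₁ : ℝ) :
    ℕ × ℕ → List Move → ℝ
  | _, [] => 0
  | (i, j), Move.diag :: l =>
      s (A (i + 1)) (B (j + 1)) + pweight A B s Δ₀ Δ₁ (i + 1, j + 1) l
  | (i, j), Move.north g :: l =>
      -(Δ₀ + Δ₁ * (g + 1)) + pweight A B s Δ₀ Δ₁ (i, j + (g + 1)) l
  | (i, j), Move.east g :: l =>
      -(Δ₀ + Δ₁ * (g + 1)) + pweight A B s Δ₀ Δ₁ (i + (g + 1), j) l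

/-- Allowed consecutive pairs of moves in an alignment path: no two consecutive
north edges, no two consecutive east edges, and no east edge immediately
following a north edge. -/
def okPair : Move → Move → Prop
  | Move.north _, Move.north _ => False
  | Move.east _, Move.east _ => False
  | Move.north _, Move.east _ => False
  | _, _ => True

/-- An alignment path: every pair of consecutive moves is allowed. -/
def alignedPath (l : List Move) : Prop := List.Chain' okPair l

/-- `Sval A B s Δ₀ Δ₁ i j`: the maximum weight (in `ℝ ∪ {±∞}`, with `sSup ∅ = ⊥`)
of an alignment path from `(0,0)` to `(i,j)` whose last edge is diagonal, with the
convention that the empty path (of weight `0`) is included at `(0,0)`. -/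
noncomputable def Sval {L : Type*} (A B : ℕ → L) (s : L → L → ℝ) (Δ₀ Δ₁ : ℝ)
    (i j : ℕ) : EReal :=
  sSup {x : EReal | ∃ l : List Move, alignedPath l ∧ endpt (0, 0) l = (i, j) ∧
    (l = [] ∨ ∃ l', l = l' ++ [Move.diag]) ∧ x = (pweight A B s Δ₀ Δ₁ (0, 0) l : ℝ)}

/-- `Ival A B s Δ₀ Δ₁ i j`: the maximum weight of an alignment path from `(0,0)`
to `(i,j)` whose last edge is a north edge. -/
noncomputable def Ival {L : Type*} (A B : ℕ → L) (s : L → L → ℝ) (Δ₀ Δ₁ : ℝ)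
    (i j : ℕ) : EReal :=
  sSup {x : EReal | ∃ (l l' : List Move) (g : ℕ), alignedPath l ∧
    endpt (0, 0) l = (i, j) ∧ l = l' ++ [Move.north g] ∧
    x = (pweight A B s Δ₀ Δ₁ (0, 0) l : ℝ)}

/-- `Dval A B s Δ₀ Δ₁ i j`: the maximum weight of an alignment path from `(0,0)`
to `(i,j)` whose last edge is an east edge. -/
noncomputable def Dval {L : Type*} (A B : ℕ → L) (s : L → L → ℝ) (Δ₀ Δ₁ : ℝ)
    (i j : ℕ) : EReal :=
  sSup {x : EReal | ∃ (l l' : List Move) (g : ℕ), alignedPath l ∧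
    endpt (0, 0) l = (i, j) ∧ l = l' ++ [Move.east g] ∧
    x = (pweight A B s Δ₀ Δ₁ (0, 0) l : ℝ)}


/-- `Mval A B s Δ₀ Δ₁ i j`: the maximum weight over ALL directed paths from `(0,0)`
to `(i,j)` in the alignment graph, with no restriction on consecutive edges. -/
noncomputable def Mval {L : Type*} (A B : ℕ → L) (s : L → L → ℝ) (Δ₀ Δ₁ : ℝ)
    (i j : ℕ) : EReal :=
  sSup {x : EReal | ∃ l : List Move, endpt (0, 0) l = (i, j) ∧
    x = (pweight A B s Δ₀ Δ₁ (0, 0) l : ℝ)}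

section Aux

/-- Insert a move in front of an aligned path, restoring alignedness. -/
def ins : Move → List Move → List Move
  | Move.diag, l => Move.diag :: l
  | Move.north g, [] => [Move.north g]
  | Move.north g, Move.diag :: t => Move.north g :: Move.diag :: t
  | Move.north g, Move.north h :: t => Move.north (g + h + 1) :: t
  | Move.north g, Move.east h :: t => Move.east h :: ins (Move.north g) t
  | Move.east g, [] => [Move.east g]
  | Move.east g, Move.diag :: t => Move.east g :: Move.diag :: t
  | Move.east g, Move.north h :: t => Move.east g :: Move.north h :: t
  | Move.east g, Move.east h :: t => Move.east (g + h + 1) :: t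

def nrm : List Move → List Move
  | [] => []
  | m :: l => ins m (nrm l)

lemma ins_ne_nil (m : Move) (l : List Move) : ins m l ≠ [] := by
  induction m, l using ins.induct <;> simp [ins]

lemma head_ins_north (g : ℕ) (l : List Move)
    (hl : ∀ h, l.head? ≠ some (Move.east h)) :
    ∃ g', (ins (Move.north g) l).head? = some (Move.north g') := by
  match l with
  | [] => exact ⟨g, rfl⟩
  | Move.diag :: t => exact ⟨g, rfl⟩
  | Move.north h :: t => exact ⟨g + h + 1, rfl⟩
  | Move.east h :: t => exact absurd rfl (hl h)

lemma aligned_ins (m : Move) (l : List Move) (hl : alignedPath l) :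
    alignedPath (ins m l) := by
  induction m, l using ins.induct with
  | case1 l =>
    simp only [ins, alignedPath]
    exact List.isChain_cons.mpr ⟨fun y _ => by cases y <;> trivial, hl⟩
  | case2 g => exact List.isChain_singleton _
  | case3 g t =>
    simp only [ins, alignedPath]
    exact List.isChain_cons.mpr ⟨fun y hy => by simp at hy; subst hy; trivial, hl⟩
  | case4 g h t =>
    simp only [ins, alignedPath]
    refine List.isChain_cons.mpr ⟨fun y hy => ?_, (List.isChain_cons.mp hl).2⟩
    have := (List.isChain_cons.mp hl).1 y hy
    cases y <;> exact this
  | case5 g h t ih =>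
    have ht : alignedPath t := (List.isChain_cons.mp hl).2
    have hne : ∀ h', t.head? ≠ some (Move.east h') := by
      intro h' hh
      exact (List.isChain_cons.mp hl).1 _ hh
    obtain ⟨g', hg'⟩ := head_ins_north g t hne
    simp only [ins, alignedPath]
    refine List.isChain_cons.mpr ⟨fun y hy => ?_, ih ht⟩
    rw [hg'] at hy
    simp at hy; subst hy; trivial
  | case6 g => exact List.isChain_singleton _
  | case7 g t =>
    simp only [ins, alignedPath]
    exact List.isChain_cons.mpr ⟨fun y hy => by simp at hy; subst hy; trivial, hl⟩
  | case8 g h t =>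
    simp only [ins, alignedPath]
    exact List.isChain_cons.mpr ⟨fun y hy => by simp at hy; subst hy; trivial, hl⟩
  | case9 g h t =>
    simp only [ins, alignedPath]
    refine List.isChain_cons.mpr ⟨fun y hy => ?_, (List.isChain_cons.mp hl).2⟩
    have := (List.isChain_cons.mp hl).1 y hy
    cases y <;> exact this

lemma endpt_ins (m : Move) (l : List Move) :
    ∀ pt, endpt pt (ins m l) = endpt pt (m :: l) := by
  induction m, l using ins.induct with
  | case4 g h t =>
    rintro ⟨i, j⟩
    simp only [ins, endpt]
    congr 2; omega
  | case5 g h t ih =>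
    rintro ⟨i, j⟩
    simp only [ins, endpt]
    rw [ih]
    rfl
  | case9 g h t =>
    rintro ⟨i, j⟩
    simp only [ins, endpt]
    congr 2; omega
  | _ => rintro ⟨i, j⟩ <;> simp only [ins, endpt]


variable {L : Type*} (A B : ℕ → L) (s : L → L → ℝ) {Δ₀ Δ₁ : ℝ}

lemma pweight_ins (hΔ₀ : 0 ≤ Δ₀) (m : Move) (l : List Move) :
    ∀ pt, pweight A B s Δ₀ Δ₁ pt (m :: l) ≤ pweight A B s Δ₀ Δ₁ pt (ins m l) := by
  induction m, l using ins.induct with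
  | case4 g h t =>
    rintro ⟨i, j⟩
    simp only [ins, pweight]
    have he : j + (g + 1) + (h + 1) = j + (g + h + 1 + 1) := by omega
    rw [he]
    push_cast
    linarith
  | case5 g h t ih =>
    rintro ⟨i, j⟩
    have := ih (i + (h + 1), j)
    simp only [ins, pweight] at this ⊢
    linarith
  | case9 g h t =>
    rintro ⟨i, j⟩
    simp only [ins, pweight]
    have he : i + (g + 1) + (h + 1) = i + (g + h + 1 + 1) := by omega
    rw [he]
    push_cast
    linarith
  | _ => rintro ⟨i, j⟩ <;> simp only [ins, pweight] <;> exact le_refl _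

lemma aligned_nrm (l : List Move) : alignedPath (nrm l) := by
  induction l with
  | nil => exact List.isChain_nil
  | cons m l ih => exact aligned_ins m _ ih

lemma endpt_nrm (l : List Move) : ∀ pt, endpt pt (nrm l) = endpt pt l := by
  induction l with
  | nil => intro pt; rfl
  | cons m l ih =>
    rintro ⟨i, j⟩
    rw [show nrm (m :: l) = ins m (nrm l) from rfl, endpt_ins]
    cases m <;> simp only [endpt] <;> exact ih _

lemma pweight_nrm (hΔ₀ : 0 ≤ Δ₀) (l : List Move) :
    ∀ pt, pweight A B s Δ₀ Δ₁ pt l ≤ pweight A B s Δ₀ Δ₁ pt (nrm l) := by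
  induction l with
  | nil => intro pt; exact le_refl _
  | cons m l ih =>
    rintro ⟨i, j⟩
    refine le_trans ?_ (pweight_ins A B s hΔ₀ m (nrm l) (i, j))
    cases m <;> simp only [pweight] <;> exact add_le_add_right (ih _) _

lemma nrm_ne_nil (m : Move) (l : List Move) : nrm (m :: l) ≠ [] :=
  ins_ne_nil m (nrm l)

end Aux

/-- Restricting to alignment paths does not change the optimal global score:
for every `(i,j)` with `i + j ≥ 1`, the maximum weight over all directed paths from
`(0,0)` to `(i,j)` equals `max{S_{i,j}, I_{i,j}, D_{i,j}}`. -/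
theorem stmt_14 {L : Type*} [Fintype L] (A B : ℕ → L) (s : L → L → ℝ)
    (Δ₀ Δ₁ : ℝ) (hΔ₀ : 0 ≤ Δ₀) (hΔ₁ : 0 ≤ Δ₁) :
    ∀ i j : ℕ, 1 ≤ i + j →
      Mval A B s Δ₀ Δ₁ i j
        = max (max (Sval A B s Δ₀ Δ₁ i j) (Ival A B s Δ₀ Δ₁ i j))
            (Dval A B s Δ₀ Δ₁ i j) := by
  intro i j hij
  apply le_antisymm
  · refine sSup_le ?_
    rintro x ⟨l, hend, rfl⟩
    have hal : alignedPath (nrm l) := aligned_nrm l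
    have hend₂ : endpt (0, 0) (nrm l) = (i, j) := by rw [endpt_nrm]; exact hend
    have hw : pweight A B s Δ₀ Δ₁ (0, 0) l ≤ pweight A B s Δ₀ Δ₁ (0, 0) (nrm l) :=
      pweight_nrm A B s hΔ₀ l _
    have hne : nrm l ≠ [] := by
      cases l with
      | nil =>
        exfalso
        have : (0, 0) = (i, j) := hend
        simp [Prod.ext_iff] at this
        omega
      | cons m t => exact nrm_ne_nil m t
    obtain ⟨l', m, hcat⟩ := (List.eq_nil_or_concat (nrm l)).resolve_left hne
    rw [List.concat_eq_append] at hcat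
    have step : (pweight A B s Δ₀ Δ₁ (0, 0) (nrm l) : EReal)
        ≤ max (max (Sval A B s Δ₀ Δ₁ i j) (Ival A B s Δ₀ Δ₁ i j))
            (Dval A B s Δ₀ Δ₁ i j) := by
      cases m with
      | diag =>
        have h1 : (pweight A B s Δ₀ Δ₁ (0, 0) (nrm l) : EReal) ≤ Sval A B s Δ₀ Δ₁ i j := by
          rw [Sval]
          exact le_sSup ⟨nrm l, hal, hend₂, Or.inr ⟨l', hcat⟩, rfl⟩
        exact le_trans h1 (le_max_of_le_left (le_max_left _ _))
      | north g =>
        have h1 : (pweight A B s Δ₀ Δ₁ (0, 0) (nrm l) : EReal) ≤ Ival A B s Δ₀ Δ₁ i j := by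
          rw [Ival]
          exact le_sSup ⟨nrm l, l', g, hal, hend₂, hcat, rfl⟩
        exact le_trans h1 (le_max_of_le_left (le_max_right _ _))
      | east g =>
        have h1 : (pweight A B s Δ₀ Δ₁ (0, 0) (nrm l) : EReal) ≤ Dval A B s Δ₀ Δ₁ i j := by
          rw [Dval]
          exact le_sSup ⟨nrm l, l', g, hal, hend₂, hcat, rfl⟩
        exact le_trans h1 (le_max_right _ _)
    exact le_trans (EReal.coe_le_coe_iff.mpr hw) step
  · refine max_le (max_le ?_ ?_) ?_ <;> refine sSup_le_sSup ?_
    · rintro x ⟨l, _, h2, _, h4⟩; exact ⟨l, h2, h4⟩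
    · rintro x ⟨l, l', g, _, h2, _, h4⟩; exact ⟨l, h2, h4⟩
    · rintro x ⟨l, l', g, _, h2, _, h4⟩; exact ⟨l, h2, h4⟩
end
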